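/- arXiv:1101.2682 — 7 statements merged into one kernel-verified Lean document; each statement's English description precedes it below -/
import Mathlib

section
/- For nonzero complex numbers ξ₁,…,ξ_N and parameters p,q with p+q=1, the sum over k from 1 to N of ∏_{j=1}^N (p + q ξ_k ξ_j - ξ_k) · 1/(ξ_k (p - q ξ_k)) · 1/∏_{j≠k} (ξ_j - ξ_k) equals p^{N-1}/∏_j ξ_j - p^{N-1}, provided all ξ_k are distinct and the expressions are defined (ξ_k ≠ 0, p - qξ_k ≠ 0). -/
open Finset Polynomial

lemma lagrange_coeff_sum (s : Finset ℂ) (P : Polynomial ℂ) (hdeg : P.degree < s.card) :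
    ∑ x ∈ s, P.eval x * (∏ y ∈ s.erase x, (x - y))⁻¹ = P.coeff (s.card - 1) := by
  have hinj : Set.InjOn id (s : Set ℂ) := Function.injective_id.injOn
  have hP := Lagrange.eq_interpolate hinj hdeg
  conv_rhs => rw [hP]
  rw [Lagrange.interpolate_apply, Polynomial.finset_sum_coeff]
  refine Finset.sum_congr rfl fun x hx => ?_
  rw [Polynomial.coeff_C_mul]
  congr 1
  have hbasis : Lagrange.basis s id x =
      Polynomial.C (∏ y ∈ s.erase x, (x - y)⁻¹) * ∏ y ∈ s.erase x, (X - Polynomial.C y) := by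
    rw [Lagrange.basis, map_prod, ← Finset.prod_mul_distrib]
    exact Finset.prod_congr rfl fun y _ => rfl
  rw [hbasis, Polynomial.coeff_C_mul]
  have hmonic : (∏ y ∈ s.erase x, (X - Polynomial.C y)).Monic :=
    monic_prod_of_monic _ _ fun y _ => monic_X_sub_C y
  have hnd : (∏ y ∈ s.erase x, (X - Polynomial.C y)).natDegree = s.card - 1 := by
    rw [Polynomial.natDegree_prod _ _ fun y _ => X_sub_C_ne_zero y]
    simp [Finset.card_erase_of_mem hx]
  rw [← hnd, hmonic.coeff_natDegree, mul_one, ← Finset.prod_inv_distrib]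

open Finset

set_option maxHeartbeats 1600000 in
/-- Residue identity (simpler identity used for the left-most particle formula):
for distinct nonzero complex ξ's avoiding poles,
∑_k ∏_j f(ξ_k,ξ_j) · [ξ_k(p−qξ_k)]⁻¹ · ∏_{j≠k}(ξ_j−ξ_k)⁻¹ = p^{N−1}(∏ ξ_j⁻¹ − 1). -/
theorem asep_simpler_identity (N : ℕ) (hN : 1 ≤ N) (p q : ℂ) (hpq : p + q = 1)
    (ξ : Fin N → ℂ) (hinj : Function.Injective ξ)
    (h0 : ∀ k, ξ k ≠ 0) (hpole : ∀ k, p - q * ξ k ≠ 0) :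
    ∑ k : Fin N,
        (∏ j : Fin N, (p + q * ξ k * ξ j - ξ k)) *
          (ξ k * (p - q * ξ k))⁻¹ *
          (∏ j ∈ Finset.univ.erase k, (ξ j - ξ k))⁻¹
      = p ^ (N - 1) / (∏ j : Fin N, ξ j) - p ^ (N - 1) := by
  classical
  obtain ⟨M, rfl⟩ : ∃ M, N = M + 1 := ⟨N - 1, (Nat.succ_pred_eq_of_pos hN).symm⟩
  simp only [Nat.add_sub_cancel]
  obtain ⟨T, hTdef⟩ : ∃ T : Finset ℂ, T = Finset.univ.image ξ := ⟨_, rfl⟩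
  have hTcard : T.card = M + 1 := by
    rw [hTdef, Finset.card_image_of_injective _ hinj, Finset.card_univ, Fintype.card_fin]
  have h0T : (0 : ℂ) ∉ T := by
    rw [hTdef]
    intro h
    obtain ⟨k, -, hk⟩ := Finset.mem_image.mp h
    exact h0 k hk
  have hTprod : ∀ g : ℂ → ℂ, ∏ y ∈ T, g y = ∏ j, g (ξ j) := fun g => by
    rw [hTdef]; exact Finset.prod_image fun a _ b _ h => hinj h
  have hTsum : ∀ g : ℂ → ℂ, ∑ y ∈ T, g y = ∑ j, g (ξ j) := fun g => by
    rw [hTdef]; exact Finset.sum_image fun a _ b _ h => hinj h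
  have hTeraseP : ∀ (k) (g : ℂ → ℂ),
      ∏ y ∈ T.erase (ξ k), g y = ∏ j ∈ Finset.univ.erase k, g (ξ j) := fun k g => by
    rw [hTdef, ← Finset.image_erase hinj]
    exact Finset.prod_image fun a _ b _ h => hinj h
  have hDne : ∀ k, (∏ j ∈ Finset.univ.erase k, (ξ k - ξ j)) ≠ 0 := by
    intro k
    refine Finset.prod_ne_zero_iff.mpr fun j hj => sub_ne_zero.mpr fun h => ?_
    exact (Finset.mem_erase.mp hj).1 (hinj h.symm)
  have hflip : ∀ k, ∏ j ∈ Finset.univ.erase k, (ξ j - ξ k)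
      = (-1) ^ M * ∏ j ∈ Finset.univ.erase k, (ξ k - ξ j) := by
    intro k
    have hc : (Finset.univ.erase k).card = M := by
      rw [Finset.card_erase_of_mem (Finset.mem_univ k), Finset.card_univ, Fintype.card_fin]
      omega
    calc ∏ j ∈ Finset.univ.erase k, (ξ j - ξ k)
        = ∏ j ∈ Finset.univ.erase k, (-1) * (ξ k - ξ j) :=
          Finset.prod_congr rfl fun j _ => by ring
      _ = _ := by rw [Finset.prod_mul_distrib, Finset.prod_const, hc]
  have hXne : (∏ j, ξ j) ≠ 0 := Finset.prod_ne_zero_iff.mpr fun j _ => h0 j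
  obtain ⟨P, hPdef⟩ : ∃ P : Polynomial ℂ,
    P = ∏ j : Fin (M + 1), (Polynomial.C (q * ξ j - 1) * Polynomial.X + Polynomial.C p) := ⟨_, rfl⟩
  have hPeval : ∀ x : ℂ, P.eval x = ∏ j, (p + q * x * ξ j - x) := by
    intro x
    rw [hPdef, Polynomial.eval_prod]
    exact Finset.prod_congr rfl fun j _ => by simp; ring
  have hPnat : P.natDegree ≤ M + 1 := by
    rw [hPdef]
    refine le_trans (Polynomial.natDegree_prod_le _ _) (le_trans
      (Finset.sum_le_sum fun j _ => Polynomial.natDegree_linear_le) ?_)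
    simp
  by_cases hq : q = 0
  · -- q = 0, p = 1
    have hp1 : p = 1 := by linear_combination hpq - hq
    subst hq hp1
    have einv : ∀ x : ℂ, (((-1:ℂ))^M * x)⁻¹ = (-1)^M * x⁻¹ := fun x => by
      rw [mul_inv, ← inv_pow, inv_neg, inv_one]
    have hscard : (insert (0:ℂ) T).card = M + 2 := by
      rw [Finset.card_insert_of_notMem h0T, hTcard]
    have hdeg : P.degree < ((insert (0:ℂ) T).card : WithBot ℕ) := by
      rw [hscard]
      exact lt_of_le_of_lt Polynomial.degree_le_natDegree
        (by exact_mod_cast Nat.lt_of_le_of_lt hPnat (by omega))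
    have hkey := lagrange_coeff_sum _ P hdeg
    rw [hscard] at hkey
    have hcoeff : P.coeff (M + 2 - 1) = (-1)^(M+1) := by
      show P.coeff (M + 1) = _
      have hPeq : P = (-1)^(M+1) * (Polynomial.X - Polynomial.C 1)^(M+1) := by
        rw [hPdef]
        calc ∏ j : Fin (M+1), (Polynomial.C ((0:ℂ) * ξ j - 1) * Polynomial.X + Polynomial.C 1)
            = ∏ _j : Fin (M+1), (-(Polynomial.X - Polynomial.C (1:ℂ))) :=
              Finset.prod_congr rfl fun j _ => by
                rw [show ((0:ℂ) * ξ j - 1) = -1 by ring, map_neg, map_one]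
                ring
          _ = _ := by
              rw [Finset.prod_const, Finset.card_univ, Fintype.card_fin, neg_pow]
              try ring
      rw [hPeq, show ((-1 : Polynomial ℂ))^(M+1) = Polynomial.C ((-1 : ℂ)^(M+1)) by
        rw [map_pow, map_neg, map_one], Polynomial.coeff_C_mul]
      have hnd : ((Polynomial.X - Polynomial.C (1:ℂ))^(M+1)).natDegree = M + 1 := by
        rw [Polynomial.natDegree_pow, Polynomial.natDegree_X_sub_C, mul_one]
      have h1 := ((Polynomial.monic_X_sub_C (1:ℂ)).pow (M+1)).coeff_natDegree
      rw [hnd] at h1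
      rw [h1, mul_one]
    rw [hcoeff, Finset.sum_insert h0T, Finset.erase_insert h0T,
      hTprod (fun y => (0:ℂ) - y)] at hkey
    have hsum3 : ∑ x ∈ T, P.eval x * (∏ y ∈ (insert (0:ℂ) T).erase x, (x - y))⁻¹
        = ∑ k, P.eval (ξ k) *
            ((ξ k - 0) * ∏ j ∈ Finset.univ.erase k, (ξ k - ξ j))⁻¹ := by
      rw [hTsum (fun x => P.eval x * (∏ y ∈ (insert (0:ℂ) T).erase x, (x - y))⁻¹)]
      refine Finset.sum_congr rfl fun k _ => ?_
      have hprodk : ∏ y ∈ (insert (0:ℂ) T).erase (ξ k), (ξ k - y)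
          = (ξ k - 0) * ∏ j ∈ Finset.univ.erase k, (ξ k - ξ j) := by
        rw [Finset.erase_insert_of_ne (Ne.symm (h0 k)),
          Finset.prod_insert (fun h => h0T (Finset.mem_of_mem_erase h)),
          hTeraseP k (fun y => ξ k - y)]
      rw [hprodk]
    rw [hsum3] at hkey
    have h3 : ∑ k, P.eval (ξ k) *
          ((ξ k - 0) * ∏ j ∈ Finset.univ.erase k, (ξ k - ξ j))⁻¹
        = (-1 : ℂ)^(M+1) - P.eval 0 * (∏ j, ((0:ℂ) - ξ j))⁻¹ := by
      linear_combination hkey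
    calc ∑ k : Fin (M+1),
        (∏ j, ((1:ℂ) + 0 * ξ k * ξ j - ξ k)) * (ξ k * (1 - 0 * ξ k))⁻¹ *
          (∏ j ∈ Finset.univ.erase k, (ξ j - ξ k))⁻¹
        = ∑ k, ((-1:ℂ)^M) * (P.eval (ξ k) *
            ((ξ k - 0) * ∏ j ∈ Finset.univ.erase k, (ξ k - ξ j))⁻¹) := by
          refine Finset.sum_congr rfl fun k _ => ?_
          rw [← hPeval (ξ k), hflip k, einv, sub_zero]
          field_simp [h0 k, hDne k]
          ring
      _ = ((-1:ℂ)^M) * ∑ k, P.eval (ξ k) *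
            ((ξ k - 0) * ∏ j ∈ Finset.univ.erase k, (ξ k - ξ j))⁻¹ := by
          rw [← Finset.mul_sum]
      _ = (1:ℂ) ^ M / (∏ j, ξ j) - 1 ^ M := by
          rw [h3]
          have hP0 : P.eval 0 = 1 := by
            rw [hPeval]
            calc ∏ j, ((1:ℂ) + 0 * 0 * ξ j - 0) = ∏ _j : Fin (M+1), (1:ℂ) :=
                Finset.prod_congr rfl fun j _ => by ring
              _ = 1 := Finset.prod_const_one
          have h0p : ∏ j, ((0:ℂ) - ξ j) = (-1)^(M+1) * ∏ j, ξ j := by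
            calc ∏ j, ((0:ℂ) - ξ j) = ∏ j : Fin (M+1), (-1) * ξ j :=
                Finset.prod_congr rfl fun j _ => by ring
              _ = _ := by rw [Finset.prod_mul_distrib, Finset.prod_const, Finset.card_univ,
                  Fintype.card_fin]
          rw [hP0, h0p, one_pow]
          rcases Nat.even_or_odd M with hM | hM
          · rw [hM.neg_one_pow, (Even.add_one hM).neg_one_pow]
            field_simp
            try linear_combination mul_inv_cancel₀ hXne
            ring
          · rw [hM.neg_one_pow, (Odd.add_one hM).neg_one_pow]
            field_simp
            try ring
  by_cases hp : p = 0
  · -- p = 0, q = 1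
    have hq1 : q = 1 := by linear_combination hpq - hp
    subst hp hq1
    have einv : ∀ x : ℂ, (((-1:ℂ))^M * x)⁻¹ = (-1)^M * x⁻¹ := fun x => by
      rw [mul_inv, ← inv_pow, inv_neg, inv_one]
    rcases Nat.eq_zero_or_pos M with rfl | hM1
    · -- N = 1
      rw [Fin.sum_univ_one, Fin.prod_univ_one]
      rw [show (Finset.univ.erase (0 : Fin 1)) = (∅ : Finset (Fin 1)) from rfl]
      rw [Finset.prod_empty]
      have hx := h0 0
      field_simp
      have hprod1 : ∏ j : Fin (0+1), ξ j = ξ 0 := Fin.prod_univ_one ξ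
      rw [hprod1]
      ring
    obtain ⟨K, rfl⟩ : ∃ K, M = K + 1 := ⟨M - 1, (Nat.succ_pred_eq_of_pos hM1).symm⟩
    set V : ℂ := ∏ j, (ξ j - 1) with hVdef
    obtain ⟨Q, hQdef⟩ : ∃ Q : Polynomial ℂ,
      Q = Polynomial.C V * Polynomial.X ^ K := ⟨_, rfl⟩
    have hQnat : Q.natDegree ≤ K := by
      rw [hQdef]
      refine le_trans (Polynomial.natDegree_mul_le) ?_
      rw [Polynomial.natDegree_C, Polynomial.natDegree_X_pow]
      omega
    have hdeg : Q.degree < (T.card : WithBot ℕ) := by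
      rw [hTcard]
      exact lt_of_le_of_lt Polynomial.degree_le_natDegree
        (by exact_mod_cast Nat.lt_of_le_of_lt hQnat (by omega))
    have hkey := lagrange_coeff_sum T Q hdeg
    rw [hTcard] at hkey
    have hcoeff : Q.coeff (K + 1 + 1 - 1) = 0 :=
      Polynomial.coeff_eq_zero_of_natDegree_lt (Nat.lt_of_le_of_lt hQnat (by omega))
    rw [hcoeff, hTsum (fun x => Q.eval x * (∏ y ∈ T.erase x, (x - y))⁻¹)] at hkey
    have hkey2 : ∑ k, V * ξ k ^ K *
        (∏ j ∈ Finset.univ.erase k, (ξ k - ξ j))⁻¹ = 0 := by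
      rw [← hkey]
      refine Finset.sum_congr rfl fun k _ => ?_
      rw [hQdef, hTeraseP k (fun y => ξ k - y)]
      simp [Polynomial.eval_mul, Polynomial.eval_pow]
    have hzero : ((0:ℂ) ^ (K + 1) / (∏ j, ξ j) - 0 ^ (K + 1)) = 0 := by
      rw [zero_pow (by omega)]
      simp
    rw [hzero]
    calc ∑ k : Fin (K+1+1),
        (∏ j, ((0:ℂ) + 1 * ξ k * ξ j - ξ k)) * (ξ k * (0 - 1 * ξ k))⁻¹ *
          (∏ j ∈ Finset.univ.erase k, (ξ j - ξ k))⁻¹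
        = ∑ k, ((-1:ℂ)^K) * (V * ξ k ^ K *
            (∏ j ∈ Finset.univ.erase k, (ξ k - ξ j))⁻¹) := by
          refine Finset.sum_congr rfl fun k _ => ?_
          rw [hflip k, einv]
          have hPk : ∏ j, ((0:ℂ) + 1 * ξ k * ξ j - ξ k) = ξ k ^ (K + 2) * V := by
            calc ∏ j, ((0:ℂ) + 1 * ξ k * ξ j - ξ k)
                = ∏ j : Fin (K+2), ξ k * (ξ j - 1) :=
                  Finset.prod_congr rfl fun j _ => by ring
              _ = _ := by
                  rw [Finset.prod_mul_distrib, Finset.prod_const, Finset.card_univ,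
                    Fintype.card_fin, hVdef]
          rw [hPk, pow_succ, pow_succ, pow_succ]
          field_simp [h0 k, hDne k]
          ring
      _ = ((-1:ℂ)^K) * ∑ k, V * ξ k ^ K *
            (∏ j ∈ Finset.univ.erase k, (ξ k - ξ j))⁻¹ := by
          rw [← Finset.mul_sum]
      _ = 0 := by rw [hkey2, mul_zero]
  · -- main case
    obtain ⟨c, hcdef⟩ : ∃ c : ℂ, c = p / q := ⟨_, rfl⟩
    have hc0 : c ≠ 0 := by rw [hcdef]; exact div_ne_zero hp hq
    have hcmem : ∀ k, ξ k ≠ c := by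
      intro k h
      apply hpole k
      rw [h, hcdef]
      field_simp
      ring
    have hcT : c ∉ T := by
      rw [hTdef]
      intro h
      obtain ⟨k, -, hk⟩ := Finset.mem_image.mp h
      exact hcmem k hk
    have h0s : (0 : ℂ) ∉ insert c T := by
      simp only [Finset.mem_insert]
      rintro (h | h)
      exacts [hc0 h.symm, h0T h]
    have hscard : (insert (0:ℂ) (insert c T)).card = M + 3 := by
      rw [Finset.card_insert_of_notMem h0s, Finset.card_insert_of_notMem hcT, hTcard]
    have hdeg : P.degree < ((insert (0:ℂ) (insert c T)).card : WithBot ℕ) := by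
      rw [hscard]
      exact lt_of_le_of_lt Polynomial.degree_le_natDegree
        (by exact_mod_cast Nat.lt_of_le_of_lt hPnat (by omega))
    have hkey := lagrange_coeff_sum _ P hdeg
    rw [hscard] at hkey
    have hc2 : P.coeff (M + 3 - 1) = 0 :=
      Polynomial.coeff_eq_zero_of_natDegree_lt (Nat.lt_of_le_of_lt hPnat (by omega))
    rw [hc2, Finset.sum_insert h0s, Finset.sum_insert hcT] at hkey
    have e0 : (insert (0:ℂ) (insert c T)).erase 0 = insert c T := Finset.erase_insert h0s
    have ec : (insert (0:ℂ) (insert c T)).erase c = insert 0 T := by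
      rw [Finset.erase_insert_of_ne (Ne.symm hc0), Finset.erase_insert hcT]
    rw [e0, ec, Finset.prod_insert hcT, Finset.prod_insert h0T,
      hTprod (fun y => (0:ℂ) - y), hTprod (fun y => c - y)] at hkey
    have hsum3 : ∑ x ∈ T, P.eval x * (∏ y ∈ (insert (0:ℂ) (insert c T)).erase x, (x - y))⁻¹
        = ∑ k, P.eval (ξ k) *
            ((ξ k - 0) * ((ξ k - c) * ∏ j ∈ Finset.univ.erase k, (ξ k - ξ j)))⁻¹ := by
      rw [hTsum (fun x => P.eval x * (∏ y ∈ (insert (0:ℂ) (insert c T)).erase x, (x - y))⁻¹)]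
      refine Finset.sum_congr rfl fun k _ => ?_
      have h0m : (0:ℂ) ∉ insert c (T.erase (ξ k)) := by
        simp only [Finset.mem_insert]
        rintro (h | h)
        exacts [hc0 h.symm, h0T (Finset.mem_of_mem_erase h)]
      have hcm : c ∉ T.erase (ξ k) := fun h => hcT (Finset.mem_of_mem_erase h)
      have hprodk : ∏ y ∈ (insert (0:ℂ) (insert c T)).erase (ξ k), (ξ k - y)
          = (ξ k - 0) * ((ξ k - c) * ∏ j ∈ Finset.univ.erase k, (ξ k - ξ j)) := by
        rw [Finset.erase_insert_of_ne (Ne.symm (h0 k)),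
          Finset.erase_insert_of_ne (Ne.symm (hcmem k)),
          Finset.prod_insert h0m, Finset.prod_insert hcm, hTeraseP k (fun y => ξ k - y)]
      rw [hprodk]
    rw [hsum3] at hkey
    have h3 : ∑ k, P.eval (ξ k) *
            ((ξ k - 0) * ((ξ k - c) * ∏ j ∈ Finset.univ.erase k, (ξ k - ξ j)))⁻¹
        = - (P.eval 0 * ((0 - c) * ∏ j, ((0:ℂ) - ξ j))⁻¹)
          - (P.eval c * ((c - 0) * ∏ j, (c - ξ j))⁻¹) := by
      linear_combination hkey
    have einv : ∀ x : ℂ, (((-1:ℂ))^M * x)⁻¹ = (-1)^M * x⁻¹ := fun x => by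
      rw [mul_inv, ← inv_pow, inv_neg, inv_one]
    have hck : ∀ k, ξ k - c = -(p - q * ξ k) / q := by
      intro k; rw [hcdef]; field_simp; ring
    calc ∑ k : Fin (M+1),
        (∏ j, (p + q * ξ k * ξ j - ξ k)) * (ξ k * (p - q * ξ k))⁻¹ *
          (∏ j ∈ Finset.univ.erase k, (ξ j - ξ k))⁻¹
        = ∑ k, ((-1:ℂ)^(M+1) * q⁻¹) * (P.eval (ξ k) *
            ((ξ k - 0) * ((ξ k - c) * ∏ j ∈ Finset.univ.erase k, (ξ k - ξ j)))⁻¹) := by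
          refine Finset.sum_congr rfl fun k _ => ?_
          rw [← hPeval (ξ k), hflip k, einv, hck k, pow_succ, sub_zero]
          have t : (ξ k * (-(p - q * ξ k)/q * ∏ j ∈ Finset.univ.erase k, (ξ k - ξ j)))⁻¹
              = -(q * (ξ k * (p - q * ξ k) * ∏ j ∈ Finset.univ.erase k, (ξ k - ξ j))⁻¹) := by
            rw [inv_eq_iff_eq_inv, inv_neg, mul_inv, inv_inv]
            field_simp
            try ring
            try tauto
          rw [t]
          field_simp [h0 k, hpole k, hDne k]
      _ = ((-1:ℂ)^(M+1) * q⁻¹) * ∑ k, P.eval (ξ k) *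
            ((ξ k - 0) * ((ξ k - c) * ∏ j ∈ Finset.univ.erase k, (ξ k - ξ j)))⁻¹ := by
          rw [← Finset.mul_sum]
      _ = p ^ M / (∏ j, ξ j) - p ^ M := by
          rw [h3]
          have hP0 : P.eval 0 = p ^ (M+1) := by
            rw [hPeval]
            calc ∏ j, (p + q * 0 * ξ j - 0) = ∏ j : Fin (M+1), p :=
                Finset.prod_congr rfl fun j _ => by ring
              _ = p ^ (M+1) := by
                rw [Finset.prod_const, Finset.card_univ, Fintype.card_fin]
          have h0p : ∏ j, ((0:ℂ) - ξ j) = (-1)^(M+1) * ∏ j, ξ j := by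
            calc ∏ j, ((0:ℂ) - ξ j) = ∏ j : Fin (M+1), (-1) * ξ j :=
                Finset.prod_congr rfl fun j _ => by ring
              _ = _ := by rw [Finset.prod_mul_distrib, Finset.prod_const, Finset.card_univ,
                  Fintype.card_fin]
          have hPc : P.eval c = (-1)^(M+1) * (p/q)^(M+1) * ∏ j, (p - q * ξ j) := by
            rw [hPeval]
            calc ∏ j, (p + q * c * ξ j - c)
                = ∏ j : Fin (M+1), (-(p/q)) * (p - q * ξ j) :=
                  Finset.prod_congr rfl fun j _ => by
                    rw [hcdef]; field_simp
                    try linear_combination p * hpq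
                    linear_combination hpq
              _ = _ := by
                  rw [Finset.prod_mul_distrib, Finset.prod_const, Finset.card_univ,
                    Fintype.card_fin, neg_pow]
                  try ring
          have hcp : ∏ j, (c - ξ j) = (q^(M+1))⁻¹ * ∏ j, (p - q * ξ j) := by
            calc ∏ j, (c - ξ j) = ∏ j : Fin (M+1), q⁻¹ * (p - q * ξ j) :=
                  Finset.prod_congr rfl fun j _ => by
                    rw [hcdef]; field_simp
                    try ring
              _ = _ := by rw [Finset.prod_mul_distrib, Finset.prod_const, Finset.card_univ,
                  Fintype.card_fin, inv_pow]
          have hWne : (∏ j, (p - q * ξ j)) ≠ 0 := Finset.prod_ne_zero_iff.mpr fun j _ => hpole j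
          rw [hP0, h0p, hPc, hcp, hcdef]
          have hqp : (q:ℂ)^(M+1) ≠ 0 := pow_ne_zero _ hq
          have hprodXi : (∏ j, ξ j) ≠ 0 := hXne
          rcases Nat.even_or_odd (M+1) with hM | hM
          · rw [hM.neg_one_pow]
            have t1 : p^(M+1) * ((0 - p/q) * (1 * ∏ j, ξ j))⁻¹
                = -(q * p^M / ∏ j, ξ j) := by
              rw [pow_succ]; field_simp; ring_nf; simp [hp]
            have t2 : (1*(p/q)^(M+1) * ∏ j, (p - q * ξ j)) *
                ((p/q - 0)*((q^(M+1))⁻¹ * ∏ j, (p - q * ξ j)))⁻¹ = p^M * q := by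
              rw [div_pow, pow_succ, pow_succ]; field_simp; ring_nf; simp [hp]
            rw [t1, t2]
            field_simp
          · rw [hM.neg_one_pow]
            have t1 : p^(M+1) * ((0 - p/q) * (-1 * ∏ j, ξ j))⁻¹
                = q * p^M / ∏ j, ξ j := by
              rw [pow_succ]; field_simp; ring_nf; simp [hp]
            have t2 : (-1*(p/q)^(M+1) * ∏ j, (p - q * ξ j)) *
                ((p/q - 0)*((q^(M+1))⁻¹ * ∏ j, (p - q * ξ j)))⁻¹ = -(p^M * q) := by
              rw [div_pow, pow_succ, pow_succ]; field_simp; ring_nf; simp [hp]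
            rw [t1, t2]
            field_simp
            ring
end

section
/- Let p + q = 1 and define the change of variables ξ_i = (1 − τη_i)/(1 − η_i) with τ = p/q. Then ∏_{i≠j} (ξ_j − ξ_i)/(p + qξ_iξ_j − ξ_i) = (1+τ)^{k(k−1)} ∏_{i≠j} (η_i − η_j)/(τη_i − η_j), whenever all expressions are defined. -/
open Finset

/-- Under the change of variables ξ_i = (1 − τη_i)/(1 − η_i), τ = p/q, p + q = 1:
∏_{i≠j} (ξ_j − ξ_i)/(p + qξ_iξ_j − ξ_i) = (1+τ)^{k(k−1)} ∏_{i≠j} (η_i − η_j)/(τη_i − η_j). -/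
theorem asep_change_of_variables (k : ℕ) (p q τ : ℂ) (hpq : p + q = 1) (hq : q ≠ 0)
    (hτ : τ = p / q) (η : Fin k → ℂ) (hη1 : ∀ i, η i ≠ 1)
    (hinj : Function.Injective η) (hcross : ∀ i j, τ * η i ≠ η j)
    (ξ : Fin k → ℂ) (hξ : ∀ i, ξ i = (1 - τ * η i) / (1 - η i))
    (hf : ∀ i j : Fin k, i ≠ j → p + q * ξ i * ξ j - ξ i ≠ 0) :
    ∏ ij ∈ Finset.univ.offDiag,
        ((ξ (ij : Fin k × Fin k).2 - ξ ij.1) / (p + q * ξ ij.1 * ξ ij.2 - ξ ij.1))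
      = (1 + τ) ^ (k * (k - 1)) *
          ∏ ij ∈ Finset.univ.offDiag,
            ((η (ij : Fin k × Fin k).1 - η ij.2) / (τ * η ij.1 - η ij.2)) := by
  have hqτ : q * τ = p := by rw [hτ]; field_simp
  have hq1 : q * (1 + τ) = 1 := by rw [mul_add, mul_one, hqτ, add_comm]; exact hpq
  have hp : p = q * τ := hqτ.symm
  subst hp
  have key : ∀ ij ∈ Finset.univ.offDiag (α := Fin k),
      ((ξ (ij : Fin k × Fin k).2 - ξ ij.1) / (q * τ + q * ξ ij.1 * ξ ij.2 - ξ ij.1))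
        = (1 + τ) * ((η ij.1 - η ij.2) / (τ * η ij.1 - η ij.2)) := by
    rintro ⟨i, j⟩ hij
    simp only [mem_offDiag] at hij
    have hne : i ≠ j := hij.2.2
    have hD := hf i j hne
    have hC : τ * η i - η j ≠ 0 := sub_ne_zero.mpr (hcross i j)
    have hai : (1 : ℂ) - η i ≠ 0 := sub_ne_zero.mpr (fun h => hη1 i h.symm)
    have haj : (1 : ℂ) - η j ≠ 0 := sub_ne_zero.mpr (fun h => hη1 j h.symm)
    have hE : (1 - η i) * (1 - η j) ≠ 0 := mul_ne_zero hai haj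
    have hxi : ξ i * (1 - η i) = 1 - τ * η i := by
      rw [hξ i, div_mul_cancel₀ _ hai]
    have hxj : ξ j * (1 - η j) = 1 - τ * η j := by
      rw [hξ j, div_mul_cancel₀ _ haj]
    have hprod : ξ i * ξ j * ((1 - η i) * (1 - η j))
        = (1 - τ * η i) * (1 - τ * η j) := by
      linear_combination (ξ j * (1 - η j)) * hxi + (1 - τ * η i) * hxj
    simp only []
    rw [div_eq_iff hD, mul_div_assoc', div_mul_eq_mul_div, eq_div_iff hC]
    refine mul_right_cancel₀ hE ?_
    linear_combination
      ((τ * η i - η j) * (1 - η i)) * hxj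
      + (-(τ * η i - η j) * (1 - η j) + (1 + τ) * (η i - η j) * (1 - η j)) * hxi
      + (-(1 + τ) * (η i - η j) * q) * hprod
      + (-(η i - η j) * (τ * (1 - η i) * (1 - η j) + (1 - τ * η i) * (1 - τ * η j))) * hq1
  rw [Finset.prod_congr rfl key, Finset.prod_mul_distrib, Finset.prod_const,
    Finset.offDiag_card, Finset.card_univ, Fintype.card_fin]
  congr 2
  cases k with
  | zero => rfl
  | succ n => simp [Nat.succ_sub_one, Nat.succ_mul, Nat.mul_succ]
end

section
/- Combining the Cauchy determinant with the substitution: for p+q=1, q≠0, distinct ξ₁,…,ξ_k avoiding poles, ∏_{i≠j} (ξ_j − ξ_i)/(p + qξ_iξ_j − ξ_i) = (−1)^k (pq)^{−k(k−1)/2} ∏_i (1 − ξ_i)(qξ_i − p) · det(1/(p + qξ_iξ_j − ξ_i))_{1≤i,j≤k}. -/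
open Finset Polynomial

/-- Homogeneous evaluation of a product of linear polynomials via coefficients. -/
lemma homog_eval {ι : Type*} [DecidableEq ι] (s : Finset ι) (c d : ι → ℂ) (t u : ℂ) :
    ∑ m ∈ Finset.range (s.card + 1),
      (∏ l ∈ s, (C (c l) * X + C (d l))).coeff m * t ^ m * u ^ (s.card - m)
    = ∏ l ∈ s, (c l * t + d l * u) := by
  induction s using Finset.induction with
  | empty => simp
  | @insert a s ha ih =>
    have hdeg : (∏ l ∈ s, (C (c l) * X + C (d l))).natDegree ≤ s.card := by
      refine (natDegree_prod_le _ _).trans ?_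
      have h1 : ∀ l ∈ s, (C (c l) * X + C (d l)).natDegree ≤ 1 :=
        fun l _ => natDegree_linear_le
      exact (Finset.sum_le_sum h1).trans (by simp)
    set P := ∏ l ∈ s, (C (c l) * X + C (d l)) with hP
    rw [Finset.prod_insert ha, Finset.prod_insert ha, Finset.card_insert_of_notMem ha]
    have hmul : (C (c a) * X + C (d a)) * P = C (c a) * (X * P) + C (d a) * P := by ring
    rw [hmul]
    have hsplit : ∀ m ∈ Finset.range (s.card + 1 + 1),
        (C (c a) * (X * P) + C (d a) * P).coeff m * t ^ m * u ^ (s.card + 1 - m)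
        = c a * ((X * P).coeff m) * t ^ m * u ^ (s.card + 1 - m)
          + d a * P.coeff m * t ^ m * u ^ (s.card + 1 - m) := by
      intro m _
      simp [coeff_add, coeff_C_mul]; ring
    rw [Finset.sum_congr rfl hsplit, Finset.sum_add_distrib]
    have h1 : ∑ m ∈ Finset.range (s.card + 1 + 1),
        c a * ((X * P).coeff m) * t ^ m * u ^ (s.card + 1 - m)
        = c a * t * ∏ l ∈ s, (c l * t + d l * u) := by
      rw [Finset.sum_range_succ']
      simp only [coeff_X_mul]
      have h0 : (X * P).coeff 0 = 0 := by simp [coeff_X_mul_zero]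
      rw [h0]
      rw [← ih]
      rw [Finset.mul_sum]
      simp only [zero_mul, mul_zero, add_zero]
      refine Finset.sum_congr rfl fun m hm => ?_
      have : s.card + 1 - (m + 1) = s.card - m := by omega
      rw [this]; ring
    have h2 : ∑ m ∈ Finset.range (s.card + 1 + 1),
        d a * P.coeff m * t ^ m * u ^ (s.card + 1 - m)
        = d a * u * ∏ l ∈ s, (c l * t + d l * u) := by
      rw [Finset.sum_range_succ]
      have h0 : P.coeff (s.card + 1) = 0 :=
        coeff_eq_zero_of_natDegree_lt (by omega)
      rw [h0, ← ih, Finset.mul_sum]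
      simp only [zero_mul, mul_zero, add_zero]
      refine Finset.sum_congr rfl fun m hm => ?_
      rw [Finset.mem_range] at hm
      have : s.card + 1 - m = (s.card - m) + 1 := by omega
      rw [this, pow_succ]; ring
    rw [h1, h2]; ring

lemma prod_lt_pairs {n : ℕ} (g : Fin n → Fin n → ℂ) :
    ∏ p ∈ Finset.univ.filter (fun p : Fin n × Fin n => p.1 < p.2), g p.1 p.2
    = ∏ i, ∏ j ∈ Finset.Ioi i, g i j := by
  rw [Finset.prod_sigma']
  exact Finset.prod_bij' (fun p _ => ⟨p.1, p.2⟩) (fun p _ => (p.1, p.2))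
    (by simp) (by simp) (by simp) (by simp) (by simp)

lemma prod_gt_pairs {n : ℕ} (g : Fin n → Fin n → ℂ) :
    ∏ p ∈ Finset.univ.filter (fun p : Fin n × Fin n => p.2 < p.1), g p.1 p.2
    = ∏ i, ∏ j ∈ Finset.Ioi i, g j i := by
  rw [← prod_lt_pairs (fun i j => g j i)]
  exact Finset.prod_bij' (fun p _ => (p.2, p.1)) (fun p _ => (p.2, p.1))
    (by simp) (by simp) (by simp) (by simp) (by simp)

lemma prod_offDiag_split {n : ℕ} (g : Fin n → Fin n → ℂ) :
    ∏ p ∈ (Finset.univ : Finset (Fin n)).offDiag, g p.1 p.2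
    = (∏ i, ∏ j ∈ Finset.Ioi i, g i j) * (∏ i, ∏ j ∈ Finset.Ioi i, g j i) := by
  rw [← prod_lt_pairs, ← prod_gt_pairs]
  rw [← Finset.prod_union]
  · congr 1
    ext p
    simp only [Finset.mem_offDiag, Finset.mem_union, Finset.mem_filter, Finset.mem_univ,
      true_and]
    exact ne_iff_lt_or_gt
  · rw [Finset.disjoint_filter]
    exact fun p _ h1 h2 => asymm h1 h2

lemma prod_erase_eq_offDiag {n : ℕ} (g : Fin n → Fin n → ℂ) :
    ∏ j, ∏ l ∈ Finset.univ.erase j, g j l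
    = ∏ p ∈ (Finset.univ : Finset (Fin n)).offDiag, g p.1 p.2 := by
  rw [Finset.prod_sigma']
  exact Finset.prod_bij' (fun p _ => (p.1, p.2)) (fun p _ => ⟨p.1, p.2⟩)
    (by simp [Finset.mem_offDiag, eq_comm]) (by simp [Finset.mem_offDiag, eq_comm])
    (by simp) (by simp) (by simp)

lemma prod_Ioi_rev {n : ℕ} (g : Fin n → Fin n → ℂ) :
    (∏ i, ∏ j ∈ Finset.Ioi i, g (Fin.rev j) (Fin.rev i)) = ∏ i, ∏ j ∈ Finset.Ioi i, g i j := by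
  rw [← prod_lt_pairs, ← prod_lt_pairs]
  exact Finset.prod_bij' (fun p _ => (Fin.rev p.2, Fin.rev p.1)) (fun p _ => (Fin.rev p.2, Fin.rev p.1))
    (by simp [Fin.rev_lt_rev]) (by simp [Fin.rev_lt_rev]) (by simp) (by simp) (by simp)

lemma sum_card_Ioi (n : ℕ) : ∑ i : Fin n, (Finset.Ioi i).card = n * (n - 1) / 2 := by
  simp only [Fin.card_Ioi]
  rw [Fin.sum_univ_eq_sum_range (fun i => n - 1 - i), ← Finset.sum_range_reflect]
  rw [← Finset.sum_range_id n]
  refine Finset.sum_congr rfl fun i hi => ?_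
  rw [Finset.mem_range] at hi
  omega

lemma sum_val_fin (n : ℕ) : ∑ d : Fin n, (d : ℕ) = n * (n - 1) / 2 := by
  rw [Fin.sum_univ_eq_sum_range (fun i => i), Finset.sum_range_id]

lemma prod_Ioi_const_mul {n : ℕ} (a : ℂ) (h : Fin n → Fin n → ℂ) :
    ∏ i, ∏ j ∈ Finset.Ioi i, (a * h i j)
    = a ^ (n * (n - 1) / 2) * ∏ i, ∏ j ∈ Finset.Ioi i, h i j := by
  simp only [Finset.prod_mul_distrib, Finset.prod_const]
  rw [Finset.prod_pow_eq_pow_sum, sum_card_Ioi]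

/-- The ASEP interaction product as a determinant:
∏_{i≠j} (ξ_j − ξ_i)/f(ξ_i,ξ_j)
= (−1)^k (pq)^{−k(k−1)/2} ∏_i (1 − ξ_i)(qξ_i − p) · det(1/f(ξ_i,ξ_j)),
where f(ξ,ξ') = p + qξξ' − ξ. -/
theorem asep_product_determinant (k : ℕ) (p q : ℂ) (hpq : p + q = 1)
    (hpq0 : p * q ≠ 0) (ξ : Fin k → ℂ) (hinj : Function.Injective ξ)
    (hf : ∀ i j : Fin k, p + q * ξ i * ξ j - ξ i ≠ 0) :
    ∏ ij ∈ Finset.univ.offDiag,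
        ((ξ (ij : Fin k × Fin k).2 - ξ ij.1) / (p + q * ξ ij.1 * ξ ij.2 - ξ ij.1))
      = (-1) ^ k * ((p * q) ^ (k * (k - 1) / 2))⁻¹ *
          (∏ i : Fin k, (1 - ξ i) * (q * ξ i - p)) *
          Matrix.det (Matrix.of fun i j : Fin k => 1 / (p + q * ξ i * ξ j - ξ i)) := by
  classical
  have hFf : ∀ i j, p + q * ξ i * ξ j - ξ i = (q * ξ j - 1) * ξ i + p := by
    intro i j; ring
  set F : Fin k → Fin k → ℂ := fun i j => (q * ξ j - 1) * ξ i + p with hFdef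
  have hF0 : ∀ i j, F i j ≠ 0 := fun i j => by
    simp only [hFdef]; rw [← hFf i j]; exact hf i j
  set N2 := k * (k - 1) / 2 with hN2
  have hNN : N2 + N2 = k * (k - 1) := by
    rcases Nat.even_mul_succ_self (k - 1) with ⟨m, hm⟩
    have h1 : k * (k - 1) = m + m := by
      cases k with
      | zero => simpa using hm
      | succ k' => simp only [Nat.add_sub_cancel] at hm ⊢; rw [mul_comm]; exact hm
    rw [hN2, h1]; omega
  set Van := ∏ i, ∏ j ∈ Finset.Ioi i, (ξ j - ξ i) with hVandef
  have hVan : Van ≠ 0 := by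
    rw [hVandef]
    refine Finset.prod_ne_zero_iff.mpr fun i _ => Finset.prod_ne_zero_iff.mpr fun j hj => ?_
    rw [Finset.mem_Ioi] at hj
    exact sub_ne_zero_of_ne fun h => absurd (hinj h) hj.ne'
  set A : Matrix (Fin k) (Fin k) ℂ :=
    Matrix.of fun d j : Fin k =>
      (∏ l ∈ Finset.univ.erase j, (C (q * ξ l - 1) * X + C p)).coeff (d : ℕ) with hAdef
  have hcard : ∀ j : Fin k, (Finset.univ.erase j).card = k - 1 := by
    intro j
    rw [Finset.card_erase_of_mem (Finset.mem_univ j), Finset.card_univ, Fintype.card_fin]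
  have key : ∀ (j : Fin k) (t u : ℂ),
      (∑ d : Fin k, t ^ (d : ℕ) * u ^ (k - 1 - (d : ℕ)) * A d j)
      = ∏ l ∈ Finset.univ.erase j, ((q * ξ l - 1) * t + p * u) := by
    intro j t u
    have hk : 0 < k := j.pos
    have hks : k - 1 + 1 = k := by omega
    simp only [hAdef, Matrix.of_apply]
    rw [← homog_eval (Finset.univ.erase j) (fun l => q * ξ l - 1) (fun _ => p) t u,
      hcard j, hks]
    have hswap := Fin.sum_univ_eq_sum_range (fun m =>
      (∏ l ∈ Finset.univ.erase j, (C (q * ξ l - 1) * X + C p)).coeff m * t ^ m *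
        u ^ (k - 1 - m)) k
    rw [← hswap]
    exact Finset.sum_congr rfl fun m _ => by ring
  have hVA : Matrix.vandermonde ξ * A
      = Matrix.of fun i j => ∏ l ∈ Finset.univ.erase j, F i l := by
    ext i j
    rw [Matrix.mul_apply, Matrix.of_apply]
    have h1 := key j (ξ i) 1
    simp only [one_pow, mul_one] at h1
    rw [← h1]
    exact Finset.sum_congr rfl fun d _ => by rw [Matrix.vandermonde_apply]
  set W : Matrix (Fin k) (Fin k) ℂ :=
    Matrix.of fun m d : Fin k => (-p) ^ (d : ℕ) * (q * ξ m - 1) ^ (k - 1 - (d : ℕ)) with hWdef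
  have hWA : W * A
      = Matrix.diagonal (fun j => ∏ l ∈ Finset.univ.erase j, (p * q * (ξ j - ξ l))) := by
    ext m j
    rw [Matrix.mul_apply]
    have h1 : ∑ d, W m d * A d j
        = ∏ l ∈ Finset.univ.erase j, ((q * ξ l - 1) * (-p) + p * (q * ξ m - 1)) := by
      rw [← key j (-p) (q * ξ m - 1)]
      exact Finset.sum_congr rfl fun d _ => by rw [hWdef, Matrix.of_apply]
    rw [h1]
    have h2 : ∏ l ∈ Finset.univ.erase j, ((q * ξ l - 1) * (-p) + p * (q * ξ m - 1))
        = ∏ l ∈ Finset.univ.erase j, (p * q * (ξ m - ξ l)) :=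
      Finset.prod_congr rfl fun l _ => by ring
    rw [h2]
    by_cases hmj : m = j
    · subst hmj; rw [Matrix.diagonal_apply_eq]
    · rw [Matrix.diagonal_apply_ne _ hmj]
      exact Finset.prod_eq_zero (Finset.mem_erase.mpr ⟨hmj, Finset.mem_univ m⟩) (by simp)
  have hdetW : W.det = (p * q) ^ N2 * Van := by
    have h1 : W.det = (∏ d : Fin k, (-p) ^ (d : ℕ)) *
        (Matrix.of fun m d : Fin k => (q * ξ m - 1) ^ (k - 1 - (d : ℕ))).det :=
      Matrix.det_mul_row _ _
    have hB : (Matrix.of fun m d : Fin k => (q * ξ m - 1) ^ (k - 1 - (d : ℕ)))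
        = (Matrix.vandermonde (fun m => q * ξ (Fin.rev m) - 1)).submatrix Fin.rev Fin.rev := by
      ext m d
      rw [Matrix.of_apply, Matrix.submatrix_apply, Matrix.vandermonde_apply, Fin.rev_rev]
      congr 1
      rw [Fin.val_rev]
      omega
    have h2 : ((Matrix.vandermonde fun m => q * ξ (Fin.rev m) - 1).submatrix
        Fin.rev Fin.rev).det = (Matrix.vandermonde fun m => q * ξ (Fin.rev m) - 1).det :=
      Matrix.det_submatrix_equiv_self Fin.revPerm _
    have h4 : (Matrix.vandermonde fun m => q * ξ (Fin.rev m) - 1).det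
        = (-q) ^ N2 * Van := by
      rw [Matrix.det_vandermonde]
      have h5 : (∏ i, ∏ j ∈ Finset.Ioi i,
          ((q * ξ (Fin.rev j) - 1) - (q * ξ (Fin.rev i) - 1)))
          = ∏ i, ∏ j ∈ Finset.Ioi i, ((q * ξ i - 1) - (q * ξ j - 1)) :=
        prod_Ioi_rev (fun a b => (q * ξ a - 1) - (q * ξ b - 1))
      rw [h5]
      have h6 : (∏ i, ∏ j ∈ Finset.Ioi i, ((q * ξ i - 1) - (q * ξ j - 1)))
          = ∏ i, ∏ j ∈ Finset.Ioi i, ((-q) * (ξ j - ξ i)) :=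
        Finset.prod_congr rfl fun i _ => Finset.prod_congr rfl fun l _ => by ring
      rw [h6, prod_Ioi_const_mul, ← hN2, hVandef]
    have h7 : (∏ d : Fin k, (-p) ^ (d : ℕ)) = (-p) ^ N2 := by
      rw [Finset.prod_pow_eq_pow_sum, sum_val_fin, hN2]
    rw [h1, hB, h2, h4, h7, ← mul_assoc, ← mul_pow]
    have : (-p) * (-q) = p * q := by ring
    rw [this]
  have hdetWA : (W * A).det = (p * q) ^ (k * (k - 1)) * ((-1) ^ N2 * (Van * Van)) := by
    rw [hWA, Matrix.det_diagonal]
    have h1 : ∀ j, (∏ l ∈ Finset.univ.erase j, (p * q * (ξ j - ξ l)))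
        = (p * q) ^ (k - 1) * ∏ l ∈ Finset.univ.erase j, (ξ j - ξ l) := by
      intro j
      rw [Finset.prod_mul_distrib, Finset.prod_const, hcard j]
    rw [Finset.prod_congr rfl fun j _ => h1 j, Finset.prod_mul_distrib, Finset.prod_const,
      Finset.card_univ, Fintype.card_fin, ← pow_mul]
    have h2 : (∏ j, ∏ l ∈ Finset.univ.erase j, (ξ j - ξ l))
        = ((-1) ^ N2 * Van) * Van := by
      rw [prod_erase_eq_offDiag (fun j l => ξ j - ξ l),
        prod_offDiag_split (fun i j => ξ i - ξ j)]
      have h3 : (∏ i, ∏ j ∈ Finset.Ioi i, (ξ i - ξ j))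
          = ∏ i, ∏ j ∈ Finset.Ioi i, ((-1) * (ξ j - ξ i)) :=
        Finset.prod_congr rfl fun i _ => Finset.prod_congr rfl fun l _ => by ring
      rw [h3, prod_Ioi_const_mul, ← hN2, ← hVandef]
    rw [h2]
    have h4 : (k - 1) * k = k * (k - 1) := mul_comm _ _
    rw [h4]
    ring
  have hdetA : A.det = (-1) ^ N2 * ((p * q) ^ N2 * Van) := by
    have hWne : W.det ≠ 0 := by
      rw [hdetW]; exact mul_ne_zero (pow_ne_zero _ hpq0) hVan
    apply mul_left_cancel₀ hWne
    rw [← Matrix.det_mul, hdetWA, hdetW, ← hNN, pow_add]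
    ring
  have hG : (∏ i, ∏ l, F i l)
      = (∏ i, F i i) * ∏ pr ∈ (Finset.univ : Finset (Fin k)).offDiag, F pr.1 pr.2 := by
    rw [← Finset.prod_product' (f := fun i l => F i l),
      ← Finset.diag_union_offDiag (Finset.univ : Finset (Fin k)),
      Finset.prod_union (Finset.disjoint_diag_offDiag _), Finset.prod_diag]
  have hOd : (∏ pr ∈ (Finset.univ : Finset (Fin k)).offDiag, F pr.1 pr.2) ≠ 0 :=
    Finset.prod_ne_zero_iff.mpr fun pr _ => hF0 pr.1 pr.2
  have hDd : (∏ i, F i i) ≠ 0 := Finset.prod_ne_zero_iff.mpr fun i _ => hF0 i i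
  have hM : (Matrix.of fun i j : Fin k => 1 / (p + q * ξ i * ξ j - ξ i))
      = Matrix.of fun i j => (∏ l, F i l)⁻¹ *
          (Matrix.of fun i' j' : Fin k => ∏ l ∈ Finset.univ.erase j', F i' l) i j := by
    ext i j
    rw [Matrix.of_apply, Matrix.of_apply, Matrix.of_apply, hFf i j]
    rw [← Finset.mul_prod_erase Finset.univ (F i) (Finset.mem_univ j), mul_inv]
    rw [mul_assoc, inv_mul_cancel₀
      (Finset.prod_ne_zero_iff.mpr fun l _ => hF0 i l), mul_one, one_div]
  have hdetM : Matrix.det (Matrix.of fun i j : Fin k => 1 / (p + q * ξ i * ξ j - ξ i))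
      = ((∏ i, F i i) * ∏ pr ∈ (Finset.univ : Finset (Fin k)).offDiag, F pr.1 pr.2)⁻¹ *
        (Van * ((-1) ^ N2 * ((p * q) ^ N2 * Van))) := by
    rw [hM]
    rw [Matrix.det_mul_column (fun i => (∏ l, F i l)⁻¹)
      (Matrix.of fun i j => ∏ l ∈ Finset.univ.erase j, F i l)]
    rw [← hVA, Matrix.det_mul, Matrix.det_vandermonde, ← hVandef, hdetA,
      Finset.prod_inv_distrib, hG]
  have hLHSnum : (∏ pr ∈ (Finset.univ : Finset (Fin k)).offDiag, (ξ pr.2 - ξ pr.1))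
      = Van * ((-1) ^ N2 * Van) := by
    rw [prod_offDiag_split (fun i j => ξ j - ξ i)]
    have h3 : (∏ i, ∏ j ∈ Finset.Ioi i, (ξ i - ξ j))
        = ∏ i, ∏ j ∈ Finset.Ioi i, ((-1) * (ξ j - ξ i)) :=
      Finset.prod_congr rfl fun i _ => Finset.prod_congr rfl fun l _ => by ring
    rw [h3, prod_Ioi_const_mul, ← hN2, ← hVandef]
  have hLHS : (∏ ij ∈ Finset.univ.offDiag,
        ((ξ (ij : Fin k × Fin k).2 - ξ ij.1) / (p + q * ξ ij.1 * ξ ij.2 - ξ ij.1)))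
      = (Van * ((-1) ^ N2 * Van)) /
        (∏ pr ∈ (Finset.univ : Finset (Fin k)).offDiag, F pr.1 pr.2) := by
    rw [← hLHSnum, ← Finset.prod_div_distrib]
    exact Finset.prod_congr rfl fun pr _ => by rw [hFf]
  have hdiagF : ∀ i, F i i = (ξ i - 1) * (q * ξ i - p) := by
    intro i
    have hq : p = 1 - q := by rw [← hpq]; ring
    simp only [hFdef]
    rw [hq]; ring
  have hprod1 : (∏ i, (1 - ξ i) * (q * ξ i - p)) = (-1 : ℂ) ^ k * ∏ i, F i i := by
    have h : ∀ i : Fin k, (1 - ξ i) * (q * ξ i - p) = (-1) * F i i := fun i => by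
      rw [hdiagF i]; ring
    rw [Finset.prod_congr rfl fun i _ => h i, Finset.prod_mul_distrib, Finset.prod_const,
      Finset.card_univ, Fintype.card_fin]
  clear_value F Van A W N2
  rw [hLHS, hdetM, hprod1]
  field_simp
  ring_nf
  rw [show ((-1 : ℂ)) ^ (k * 2) = 1 by rw [mul_comm, pow_mul]; norm_num]
end

section
/- With K₀ and 0 < τ < 1 as above, the Fredholm determinant satisfies det(I − λK₀) = ∏_{k=0}^∞ (1 − λτ^k) for all λ with |λ| sufficiently small (and by analytic continuation for all λ). -/
open Complex

/-- `K0iter τ ρ n` is the kernel of the (n+1)-st power of the integral operator K₀ on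
the circle |η| = ρ with kernel 1/(η' − τη) and contour measure dη/(2πi). -/
noncomputable def K0iter (τ ρ : ℝ) : ℕ → ℂ → ℂ → ℂ
  | 0 => fun η η' => 1 / (η' - (τ : ℂ) * η)
  | n + 1 => fun η η' =>
      (2 * ↑Real.pi * I)⁻¹ *
        ∮ ζ in C(0, ρ), K0iter τ ρ n η ζ * (1 / (η' - (τ : ℂ) * ζ))

open Metric in
lemma circleIntegral_inv_sub_of_outside {b : ℂ} {ρ : ℝ} (hρ : 0 ≤ ρ) (hb : ρ < ‖b‖) :
    (∮ ζ in C(0, ρ), (ζ - b)⁻¹) = 0 := by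
  have hne : ∀ z ∈ closedBall (0 : ℂ) ρ, z - b ≠ 0 := by
    intro z hz
    rw [mem_closedBall_zero_iff] at hz
    intro h
    rw [sub_eq_zero] at h
    exact absurd (h ▸ hz) (not_le.2 hb)
  refine circleIntegral_eq_zero_of_differentiable_on_off_countable hρ Set.countable_empty
    ?_ ?_
  · exact ((continuous_id.sub continuous_const).continuousOn).inv₀ hne
  · intro z hz
    exact (differentiableAt_id.sub_const _).inv (hne z (ball_subset_closedBall hz.1))

open Metric in
lemma K0iter_eq (τ ρ : ℝ) (hτ0 : 0 < τ) (hτ1 : τ < 1) (hρ : 0 < ρ) :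
    ∀ n (η η' : ℂ), ‖η‖ ≤ ρ → ρ ≤ ‖η'‖ →
      K0iter τ ρ n η η' = 1 / (η' - (τ : ℂ) ^ (n + 1) * η) := by
  have hτC : (τ : ℂ) ≠ 0 := by exact_mod_cast hτ0.ne'
  intro n
  induction n with
  | zero => intro η η' _ _; simp [K0iter]
  | succ n ih =>
    intro η η' hη hη'
    set a : ℂ := (τ : ℂ) ^ (n + 1) * η with ha
    set b : ℂ := η' / τ with hb
    have hτpow : τ ^ (n + 1) < 1 := pow_lt_one₀ hτ0.le hτ1 (Nat.succ_ne_zero n)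
    have hτpow0 : 0 < τ ^ (n + 1) := pow_pos hτ0 _
    have hna : ‖a‖ < ρ := by
      have : ‖a‖ = τ ^ (n + 1) * ‖η‖ := by
        rw [ha, norm_mul, norm_pow, Complex.norm_real, Real.norm_eq_abs, abs_of_pos hτ0]
      rw [this]
      calc τ ^ (n + 1) * ‖η‖ ≤ τ ^ (n + 1) * ρ := by
            exact mul_le_mul_of_nonneg_left hη hτpow0.le
        _ < 1 * ρ := by exact mul_lt_mul_of_pos_right hτpow hρ
        _ = ρ := one_mul ρ
    have hnb : ρ < ‖b‖ := by
      have : ‖b‖ = ‖η'‖ / τ := by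
        rw [hb, norm_div, Complex.norm_real, Real.norm_eq_abs, abs_of_pos hτ0]
      rw [this]
      calc ρ = ρ * 1 := (mul_one ρ).symm
        _ < ρ * (1 / τ) := by
            apply mul_lt_mul_of_pos_left _ hρ
            rw [lt_div_iff₀ hτ0]; linarith
        _ ≤ ‖η'‖ * (1 / τ) := by
            apply mul_le_mul_of_nonneg_right hη'
            positivity
        _ = ‖η'‖ / τ := by ring
    have hab : a ≠ b := by
      intro h
      have h2 : ‖a‖ < ‖b‖ := hna.trans hnb
      rw [h] at h2
      exact lt_irrefl _ h2
    have hτb : (τ : ℂ) * b = η' := by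
      rw [hb]; field_simp
    have key : Set.EqOn (fun ζ => K0iter τ ρ n η ζ * (1 / (η' - (τ : ℂ) * ζ)))
        (fun ζ => ((-(τ : ℂ))⁻¹ * (a - b)⁻¹) * ((ζ - a)⁻¹ - (ζ - b)⁻¹))
        (sphere (0 : ℂ) ρ) := by
      intro ζ hζ
      rw [mem_sphere_zero_iff_norm] at hζ
      have hζa : ζ - a ≠ 0 := by
        intro h; rw [sub_eq_zero] at h; exact absurd (h ▸ hna) (by simp [hζ])
      have hζb : ζ - b ≠ 0 := by
        intro h; rw [sub_eq_zero] at h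
        exact absurd (h ▸ hnb) (by simp [hζ])
      have hε : η' - (τ : ℂ) * ζ = -(τ : ℂ) * (ζ - b) := by
        rw [hb]; field_simp; ring
      simp only
      rw [ih η ζ hη (le_of_eq hζ.symm), hε]
      rw [← ha]
      have habne : a - b ≠ 0 := sub_ne_zero.2 hab
      field_simp
      ring
    have hint_a : (∮ ζ in C(0, ρ), (ζ - a)⁻¹) = 2 * ↑Real.pi * I :=
      circleIntegral.integral_sub_inv_of_mem_ball (by simpa [mem_ball_zero_iff] using hna)
    have hint_b : (∮ ζ in C(0, ρ), (ζ - b)⁻¹) = 0 :=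
      circleIntegral_inv_sub_of_outside hρ.le hnb
    have hCIa : CircleIntegrable (fun ζ => (ζ - a)⁻¹) 0 ρ := by
      rw [circleIntegrable_sub_inv_iff]
      right; simp only [mem_sphere_zero_iff_norm, abs_of_pos hρ]; exact hna.ne
    have hCIb : CircleIntegrable (fun ζ => (ζ - b)⁻¹) 0 ρ := by
      rw [circleIntegrable_sub_inv_iff]
      right; simp only [mem_sphere_zero_iff_norm, abs_of_pos hρ]; exact hnb.ne'
    show (2 * ↑Real.pi * I)⁻¹ *
        (∮ ζ in C(0, ρ), K0iter τ ρ n η ζ * (1 / (η' - (τ : ℂ) * ζ))) = _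
    rw [circleIntegral.integral_congr hρ.le key]
    rw [circleIntegral.integral_const_mul]
    rw [circleIntegral.integral_sub hCIa hCIb, hint_a, hint_b]
    have habne : a - b ≠ 0 := sub_ne_zero.2 hab
    have hden : η' - (τ : ℂ) ^ (n + 1 + 1) * η = -(τ : ℂ) * (a - b) := by
      rw [ha, hb]; field_simp; ring
    rw [hden]
    have h2πI : (2 * ↑Real.pi * I : ℂ) ≠ 0 := Complex.two_pi_I_ne_zero
    field_simp
    try ring

open Metric in
lemma K0_trace (τ ρ : ℝ) (hτ0 : 0 < τ) (hτ1 : τ < 1) (hρ : 0 < ρ) (n : ℕ) :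
    (2 * ↑Real.pi * I)⁻¹ * (∮ η in C(0, ρ), K0iter τ ρ n η η)
      = (1 - (τ : ℂ) ^ (n + 1))⁻¹ := by
  have hτpow : τ ^ (n + 1) < 1 := pow_lt_one₀ hτ0.le hτ1 (Nat.succ_ne_zero n)
  have hone : (1 : ℂ) - (τ : ℂ) ^ (n + 1) ≠ 0 := by
    have hcast : ((1 - τ ^ (n + 1) : ℝ) : ℂ) = 1 - (τ : ℂ) ^ (n + 1) := by push_cast; ring
    rw [← hcast]
    exact Complex.ofReal_ne_zero.mpr (by linarith)
  have key : Set.EqOn (fun η => K0iter τ ρ n η η)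
      (fun η => (1 - (τ : ℂ) ^ (n + 1))⁻¹ * (η - 0)⁻¹) (sphere (0 : ℂ) ρ) := by
    intro η hη
    rw [mem_sphere_zero_iff_norm] at hη
    have hη0 : η ≠ 0 := by
      intro h; rw [h] at hη; simp at hη; linarith
    simp only [sub_zero]
    rw [K0iter_eq τ ρ hτ0 hτ1 hρ n η η (le_of_eq hη) (le_of_eq hη.symm)]
    have : η - (τ : ℂ) ^ (n + 1) * η = (1 - (τ : ℂ) ^ (n + 1)) * η := by ring
    rw [this, one_div, mul_inv]
  rw [circleIntegral.integral_congr hρ.le key, circleIntegral.integral_const_mul,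
    circleIntegral.integral_sub_inv_of_mem_ball (by simpa [mem_ball_zero_iff] using hρ)]
  have h2πI : (2 * ↑Real.pi * I : ℂ) ≠ 0 := Complex.two_pi_I_ne_zero
  field_simp

set_option maxHeartbeats 1000000 in
/-- The Fredholm determinant det(I − λK₀), computed through
log det(I − λK₀) = −∑_{n≥1} (λⁿ/n) tr K₀ⁿ, equals ∏_{k=0}^∞ (1 − λτ^k). -/
theorem fredholm_det_K0 (τ ρ : ℝ) (hτ0 : 0 < τ) (hτ1 : τ < 1) (hρ : 0 < ρ)
    (lam : ℂ) (hlam : ‖lam‖ < 1) :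
    Complex.exp (-(∑' n : ℕ, lam ^ (n + 1) / ((n : ℂ) + 1) *
        ((2 * ↑Real.pi * I)⁻¹ * ∮ η in C(0, ρ), K0iter τ ρ n η η)))
      = ∏' k : ℕ, (1 - lam * (τ : ℂ) ^ k) := by
  -- replace the trace by (1 - τ^{n+1})⁻¹
  have htr : ∀ n : ℕ, lam ^ (n + 1) / ((n : ℂ) + 1) *
      ((2 * ↑Real.pi * I)⁻¹ * ∮ η in C(0, ρ), K0iter τ ρ n η η)
      = lam ^ (n + 1) / ((n : ℂ) + 1) * (1 - (τ : ℂ) ^ (n + 1))⁻¹ := by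
    intro n; rw [K0_trace τ ρ hτ0 hτ1 hρ n]
  rw [tsum_congr htr]
  -- basic norm facts
  have hτk_lt : ∀ k : ℕ, ‖lam * (τ : ℂ) ^ k‖ < 1 := by
    intro k
    have h1 : ‖lam * (τ : ℂ) ^ k‖ = ‖lam‖ * τ ^ k := by
      rw [norm_mul, norm_pow, Complex.norm_real, Real.norm_eq_abs, abs_of_pos hτ0]
    have h2 : τ ^ k ≤ 1 := pow_le_one₀ hτ0.le hτ1.le
    calc ‖lam * (τ : ℂ) ^ k‖ = ‖lam‖ * τ ^ k := h1
      _ ≤ ‖lam‖ * 1 := mul_le_mul_of_nonneg_left h2 (norm_nonneg _)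
      _ = ‖lam‖ := mul_one _
      _ < 1 := hlam
  have hne : ∀ k : ℕ, (1 : ℂ) - lam * (τ : ℂ) ^ k ≠ 0 := by
    intro k h
    rw [sub_eq_zero] at h
    have := hτk_lt k
    rw [← h] at this
    simp at this
  -- the double sum
  set F : ℕ × ℕ → ℂ := fun p => (lam * (τ : ℂ) ^ p.1) ^ (p.2 + 1) / ((p.2 : ℂ) + 1) with hF
  have hFnorm : Summable fun p : ℕ × ℕ => ‖F p‖ := by
    have hgsum : Summable (fun p : ℕ × ℕ => (τ ^ p.1) * ‖lam‖ ^ (p.2 + 1)) := by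
      have hg1 : Summable fun k : ℕ => τ ^ k := summable_geometric_of_lt_one hτ0.le hτ1
      have hg2 : Summable fun n : ℕ => ‖lam‖ ^ (n + 1) := by
        have h := (summable_geometric_of_lt_one (norm_nonneg lam) hlam).mul_left ‖lam‖
        refine h.congr fun n => ?_
        rw [← pow_succ']
      exact hg1.mul_of_nonneg hg2 (fun k => by positivity) (fun n => by positivity)
    refine Summable.of_nonneg_of_le (fun p => norm_nonneg _) ?_ hgsum
    · intro p
      rw [hF]
      simp only [norm_div, norm_pow, norm_mul]
      have hτn : ‖(τ : ℂ)‖ = τ := by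
        rw [Complex.norm_real, Real.norm_eq_abs, abs_of_pos hτ0]
      rw [hτn]
      have h2 : (1 : ℝ) ≤ ‖((p.2 : ℂ) + 1)‖ := by
        have hc : ((p.2 : ℂ) + 1) = ((p.2 + 1 : ℕ) : ℂ) := by push_cast; ring
        rw [hc, Complex.norm_natCast]
        exact_mod_cast Nat.one_le_iff_ne_zero.2 (Nat.succ_ne_zero _)
      have hτp1 : τ ^ p.1 ≤ 1 := pow_le_one₀ hτ0.le hτ1.le
      have hbound : (‖lam‖ * τ ^ p.1) ^ (p.2 + 1) ≤ τ ^ p.1 * ‖lam‖ ^ (p.2 + 1) := by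
        rw [mul_pow, mul_comm]
        apply mul_le_mul_of_nonneg_right _ (pow_nonneg (norm_nonneg _) _)
        calc (τ ^ p.1) ^ (p.2 + 1) ≤ (τ ^ p.1) ^ 1 :=
              pow_le_pow_of_le_one (by positivity) hτp1 (by omega)
          _ = τ ^ p.1 := pow_one _
      calc (‖lam‖ * τ ^ p.1) ^ (p.2 + 1) / ‖((p.2 : ℂ) + 1)‖
            ≤ (‖lam‖ * τ ^ p.1) ^ (p.2 + 1) := div_le_self (by positivity) h2
        _ ≤ τ ^ p.1 * ‖lam‖ ^ (p.2 + 1) := hbound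
  have hFsum : Summable F := by
    exact Summable.of_norm hFnorm
  -- step 1: expand the geometric series in k
  have step1 : (∑' n : ℕ, lam ^ (n + 1) / ((n : ℂ) + 1) * (1 - (τ : ℂ) ^ (n + 1))⁻¹)
      = ∑' n : ℕ, ∑' k : ℕ, F (k, n) := by
    apply tsum_congr
    intro n
    have hτn : ‖(τ : ℂ) ^ (n + 1)‖ < 1 := by
      rw [norm_pow, Complex.norm_real, Real.norm_eq_abs, abs_of_pos hτ0]
      exact pow_lt_one₀ hτ0.le hτ1 (Nat.succ_ne_zero n)
    rw [← tsum_geometric_of_norm_lt_one hτn, ← tsum_mul_left]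
    apply tsum_congr
    intro k
    rw [hF]
    simp only
    rw [mul_pow, div_mul_eq_mul_div]
    congr 1
    rw [← pow_mul, ← pow_mul, mul_comm (n + 1) k]
  -- step 2: swap the sums
  have step2 : (∑' n : ℕ, ∑' k : ℕ, F (k, n)) = ∑' k : ℕ, ∑' n : ℕ, F (k, n) :=
    Summable.tsum_comm (f := fun k n => F (k, n)) (by exact hFsum)
  -- step 3: inner sum is -log(1 - lam τ^k)
  have hinner : ∀ k : ℕ, HasSum (fun n : ℕ => F (k, n)) (-Complex.log (1 - lam * (τ : ℂ) ^ k)) := by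
    intro k
    have h := hasSum_taylorSeries_neg_log (hτk_lt k)
    have : HasSum (fun n : ℕ => (lam * (τ : ℂ) ^ k) ^ (n + 1) / ((n + 1 : ℕ) : ℂ))
        (-Complex.log (1 - lam * (τ : ℂ) ^ k)) := by
      rw [hasSum_nat_add_iff (f := fun n : ℕ => (lam * (τ : ℂ) ^ k) ^ n / (n : ℂ)) 1]
      simpa using h
    refine this.congr_fun fun n => ?_
    rw [hF]
    push_cast
    ring_nf
  have step3 : (∑' k : ℕ, ∑' n : ℕ, F (k, n))
      = ∑' k : ℕ, -Complex.log (1 - lam * (τ : ℂ) ^ k) := by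
    apply tsum_congr
    intro k
    exact (hinner k).tsum_eq
  rw [step1, step2, step3]
  -- step 4: exp of sum of logs is the product
  have hlog_summable : Summable fun k : ℕ => Complex.log (1 - lam * (τ : ℂ) ^ k) := by
    have hnormsum : Summable fun k : ℕ => ∑' n : ℕ, ‖F (k, n)‖ :=
      ((summable_prod_of_nonneg (fun p => norm_nonneg _)).1 hFnorm).2
    have h1 : Summable fun k : ℕ => ∑' n : ℕ, F (k, n) := by
      refine Summable.of_norm ?_
      refine Summable.of_nonneg_of_le (fun k => norm_nonneg _)
        (fun k => norm_tsum_le_tsum_norm (hFnorm.prod_factor k)) hnormsum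
    have h2 : (fun k : ℕ => Complex.log (1 - lam * (τ : ℂ) ^ k))
        = fun k : ℕ => -(∑' n : ℕ, F (k, n)) := by
      funext k
      rw [(hinner k).tsum_eq]
      ring
    rw [h2]
    exact h1.neg
  have hprod : HasProd (fun k : ℕ => (1 - lam * (τ : ℂ) ^ k))
      (Complex.exp (∑' k : ℕ, Complex.log (1 - lam * (τ : ℂ) ^ k))) := by
    have h := hlog_summable.hasSum.cexp
    have hfun : (cexp ∘ fun k : ℕ => Complex.log (1 - lam * (τ : ℂ) ^ k))
        = fun k : ℕ => 1 - lam * (τ : ℂ) ^ k := by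
      funext k; exact Complex.exp_log (hne k)
    rwa [hfun] at h
  rw [← tsum_neg]
  simp only [neg_neg]
  exact hprod.tprod_eq.symm
end

section
/- For the TASEP case p = 1, q = 0, the Bethe Ansatz amplitude factorizes: A_σ := sgn(σ) ∏_{i<j} f(ξ_{σ(i)}, ξ_{σ(j)}) / ∏_{i<j} f(ξ_i, ξ_j) with f(ξ,ξ') = 1 − ξ equals sgn(σ) ∏_i (1 − ξ_{σ(i)})^{σ(i)−i}. -/
open Finset

/-- For TASEP (p = 1, q = 0, so f(ξ,ξ') = 1 − ξ) the Bethe Ansatz amplitude factorizes: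
A_σ = sgn(σ) ∏_{i<j} f(ξ_{σ(i)},ξ_{σ(j)}) / ∏_{i<j} f(ξ_i,ξ_j)
    = sgn(σ) ∏_i (1 − ξ_{σ(i)})^{σ(i)−i}. -/
theorem tasep_amplitude_factorization (N : ℕ) (ξ : Fin N → ℂ) (hξ : ∀ i, ξ i ≠ 1)
    (σ : Equiv.Perm (Fin N)) :
    ((Equiv.Perm.sign σ : ℤ) : ℂ) *
        (∏ i : Fin N, ∏ j ∈ Finset.Ioi i, (1 - ξ (σ i))) /
        ∏ i : Fin N, ∏ j ∈ Finset.Ioi i, (1 - ξ i)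
      = ((Equiv.Perm.sign σ : ℤ) : ℂ) *
          ∏ i : Fin N, (1 - ξ (σ i)) ^ (((σ i : ℕ) : ℤ) - ((i : ℕ) : ℤ)) := by
  have ha : ∀ i, (1 : ℂ) - ξ i ≠ 0 := fun i => sub_ne_zero.mpr fun h => hξ i h.symm
  have hP : (∏ i : Fin N, ∏ _j ∈ Finset.Ioi i, (1 - ξ (σ i)))
      = ∏ i : Fin N, (1 - ξ (σ i)) ^ (((N - 1 - (i : ℕ) : ℕ)) : ℤ) := by
    refine Finset.prod_congr rfl fun i _ => ?_
    rw [Finset.prod_const, Fin.card_Ioi, zpow_natCast]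
  have hQ : (∏ i : Fin N, ∏ _j ∈ Finset.Ioi i, (1 - ξ i))
      = ∏ i : Fin N, (1 - ξ (σ i)) ^ (((N - 1 - (σ i : ℕ) : ℕ)) : ℤ) := by
    rw [← Equiv.prod_comp σ (fun i => ∏ _j ∈ Finset.Ioi i, (1 - ξ i))]
    refine Finset.prod_congr rfl fun i _ => ?_
    rw [Finset.prod_const, Fin.card_Ioi, zpow_natCast]
  rw [hP, hQ, mul_div_assoc, ← Finset.prod_div_distrib]
  congr 1
  refine Finset.prod_congr rfl fun i _ => ?_
  rw [← zpow_sub₀ (ha (σ i))]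
  congr 1
  have hi : (i : ℕ) < N := i.isLt
  have hs : ((σ i : Fin N) : ℕ) < N := (σ i).isLt
  omega
end

section
/- Let p + q = 1 and f(ξ,ξ') = p + qξξ' − ξ. The two-particle boundary-condition system: for each σ ∈ S_N and each i ∈ {1,…,N−1}, F_σ f(ξ_{σ(i+1)}, ξ_{σ(i)}) + F_{T_iσ} f(ξ_{σ(i)}, ξ_{σ(i+1)}) = 0 (where T_iσ interchanges the i-th and (i+1)-st entries of σ), is solved by F_σ(ξ) = sgn(σ) ∏_{i<j} f(ξ_{σ(i)}, ξ_{σ(j)}) · φ(ξ) for any symmetric function φ. -/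
open Finset

/-- The Bethe Ansatz coefficients F_σ = sgn(σ) ∏_{i<j} f(ξ_{σ(i)},ξ_{σ(j)}) · φ(ξ)
solve the boundary-condition system
F_σ f(ξ_{σ(i+1)},ξ_{σ(i)}) + F_{T_iσ} f(ξ_{σ(i)},ξ_{σ(i+1)}) = 0,
where f(ξ,ξ') = p + qξξ' − ξ, T_iσ interchanges the i-th and (i+1)-st entries of σ,
and φ is any symmetric function. -/
theorem bethe_boundary_conditions (N : ℕ) (p q : ℂ) (hpq : p + q = 1)
    (ξ : Fin N → ℂ) (φ : (Fin N → ℂ) → ℂ)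
    (hφ : ∀ σ : Equiv.Perm (Fin N), φ (ξ ∘ σ) = φ ξ)
    (F : Equiv.Perm (Fin N) → ℂ)
    (hF : ∀ σ : Equiv.Perm (Fin N), F σ =
      ((Equiv.Perm.sign σ : ℤ) : ℂ) *
        (∏ i : Fin N, ∏ j ∈ Finset.Ioi i,
          (p + q * ξ (σ i) * ξ (σ j) - ξ (σ i))) * φ ξ)
    (σ : Equiv.Perm (Fin N)) (a b : Fin N) (hab : (a : ℕ) + 1 = (b : ℕ)) :
    F σ * (p + q * ξ (σ b) * ξ (σ a) - ξ (σ b)) +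
        F (σ * Equiv.swap a b) * (p + q * ξ (σ a) * ξ (σ b) - ξ (σ a)) = 0 := by
  have hab' : a < b := by
    rw [Fin.lt_def]; omega
  have hne : a ≠ b := Fin.ne_of_lt hab'
  set τ := Equiv.swap a b with hτdef
  set h : Fin N → Fin N → ℂ := fun i j => p + q * ξ (σ i) * ξ (σ j) - ξ (σ i) with hh
  set S : Finset (Σ _ : Fin N, Fin N) := Finset.univ.sigma fun i => Finset.Ioi i with hS
  have hmemab : (⟨a, b⟩ : Σ _ : Fin N, Fin N) ∈ S := by
    simp [hS, Finset.mem_sigma, Finset.mem_Ioi, hab']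
  -- order preservation for pairs other than (a,b)
  have hord : ∀ x : (Σ _ : Fin N, Fin N), x ∈ S → x ≠ ⟨a, b⟩ → τ x.1 < τ x.2 := by
    rintro ⟨i, j⟩ hx hxab
    simp only [hS, Finset.mem_sigma, Finset.mem_univ, Finset.mem_Ioi, true_and] at hx
    have hxab' : ¬(i = a ∧ j = b) := by
      intro ⟨h1, h2⟩; exact hxab (by subst h1; subst h2; rfl)
    have hij : (i : ℕ) < (j : ℕ) := hx
    by_cases hia : i = a
    · have hjb : j ≠ b := fun hjb => hxab' ⟨hia, hjb⟩
      have hja : j ≠ a := fun hja => by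
        subst hja; exact lt_irrefl _ (hia ▸ hx)
      rw [hia, hτdef, Equiv.swap_apply_left, Equiv.swap_apply_of_ne_of_ne hja hjb]
      have h1 : (a : ℕ) < (j : ℕ) := hia ▸ hij
      have h2 : (j : ℕ) ≠ (b : ℕ) := fun hv => hjb (Fin.ext hv)
      rw [Fin.lt_def]; omega
    · by_cases hib : i = b
      · have hja : j ≠ a := by
          intro hja
          rw [Fin.lt_def] at hab'
          subst hja; subst hib; omega
        have hjb : j ≠ b := fun hjb => by rw [hib, hjb] at hx; exact lt_irrefl _ hx
        rw [hib, hτdef, Equiv.swap_apply_right, Equiv.swap_apply_of_ne_of_ne hja hjb]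
        rw [Fin.lt_def] at *
        have : (b : ℕ) < (j : ℕ) := hib ▸ hij
        omega
      · rw [hτdef, Equiv.swap_apply_of_ne_of_ne hia hib]
        by_cases hja : j = a
        · rw [hja, Equiv.swap_apply_left]
          have : (j : ℕ) = (a : ℕ) := by rw [hja]
          rw [Fin.lt_def]; omega
        · by_cases hjb : j = b
          · rw [hjb, Equiv.swap_apply_right]
            have h1 : (j : ℕ) = (b : ℕ) := by rw [hjb]
            have h2 : (i : ℕ) ≠ (a : ℕ) := fun hv => hia (Fin.ext hv)
            rw [Fin.lt_def]; omega
          · rw [Equiv.swap_apply_of_ne_of_ne hja hjb]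
            exact hx
  have key1 : (∏ i : Fin N, ∏ j ∈ Finset.Ioi i, h i j)
      = h a b * ∏ x ∈ S.erase ⟨a, b⟩, h x.1 x.2 := by
    rw [Finset.prod_sigma']
    exact (Finset.mul_prod_erase S (fun x => h x.1 x.2) hmemab).symm
  have key2 : (∏ i : Fin N, ∏ j ∈ Finset.Ioi i, h (τ i) (τ j))
      = h b a * ∏ x ∈ S.erase ⟨a, b⟩, h x.1 x.2 := by
    rw [Finset.prod_sigma']
    have step : (∏ x ∈ S, h (τ x.1) (τ x.2))
        = ∏ x ∈ S, (if x = (⟨a, b⟩ : Σ _ : Fin N, Fin N) then h b a else h x.1 x.2) := by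
      refine Finset.prod_nbij'
        (fun x => if x = (⟨a, b⟩ : Σ _ : Fin N, Fin N) then x else ⟨τ x.1, τ x.2⟩)
        (fun x => if x = (⟨a, b⟩ : Σ _ : Fin N, Fin N) then x else ⟨τ x.1, τ x.2⟩)
        ?_ ?_ ?_ ?_ ?_
      · intro x hx
        by_cases hxab : x = (⟨a, b⟩ : Σ _ : Fin N, Fin N)
        · simpa [hxab] using hx
        · simp only [hxab, if_neg, if_false]
          simp only [hS, Finset.mem_sigma, Finset.mem_univ, Finset.mem_Ioi, true_and]
          exact hord x hx hxab
      · intro x hx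
        by_cases hxab : x = (⟨a, b⟩ : Σ _ : Fin N, Fin N)
        · simpa [hxab] using hx
        · simp only [hxab, if_neg, if_false]
          simp only [hS, Finset.mem_sigma, Finset.mem_univ, Finset.mem_Ioi, true_and]
          exact hord x hx hxab
      · intro x hx
        by_cases hxab : x = (⟨a, b⟩ : Σ _ : Fin N, Fin N)
        · simp [hxab]
        · have hne2 : (⟨τ x.1, τ x.2⟩ : Σ _ : Fin N, Fin N) ≠ ⟨a, b⟩ := by
            intro hc
            have h1 : τ x.1 = a := congrArg Sigma.fst hc
            have h2 : τ x.2 = b := by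
              have := (Sigma.mk.inj_iff.mp hc).2
              exact eq_of_heq this
            have hx1 : x.1 = b := by
              have := congrArg τ h1
              simpa [hτdef, Equiv.swap_apply_self, Equiv.swap_apply_left] using this
            have hx2 : x.2 = a := by
              have := congrArg τ h2
              simpa [hτdef, Equiv.swap_apply_self, Equiv.swap_apply_right] using this
            obtain ⟨x1, x2⟩ := x
            simp only at hx1 hx2
            subst hx1; subst hx2
            simp only [hS, Finset.mem_sigma, Finset.mem_univ, Finset.mem_Ioi, true_and] at hx
            exact absurd hx (not_lt.mpr (le_of_lt hab'))
          simp only [hxab, if_neg, if_false, hne2]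
          simp [hτdef, Equiv.swap_apply_self]
      · intro x hx
        by_cases hxab : x = (⟨a, b⟩ : Σ _ : Fin N, Fin N)
        · simp [hxab]
        · have hne2 : (⟨τ x.1, τ x.2⟩ : Σ _ : Fin N, Fin N) ≠ ⟨a, b⟩ := by
            intro hc
            have h1 : τ x.1 = a := congrArg Sigma.fst hc
            have h2 : τ x.2 = b := by
              have := (Sigma.mk.inj_iff.mp hc).2
              exact eq_of_heq this
            have hx1 : x.1 = b := by
              have := congrArg τ h1
              simpa [hτdef, Equiv.swap_apply_self, Equiv.swap_apply_left] using this
            have hx2 : x.2 = a := by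
              have := congrArg τ h2
              simpa [hτdef, Equiv.swap_apply_self, Equiv.swap_apply_right] using this
            obtain ⟨x1, x2⟩ := x
            simp only at hx1 hx2
            subst hx1; subst hx2
            simp only [hS, Finset.mem_sigma, Finset.mem_univ, Finset.mem_Ioi, true_and] at hx
            exact absurd hx (not_lt.mpr (le_of_lt hab'))
          simp only [hxab, if_neg, if_false, hne2]
          simp [hτdef, Equiv.swap_apply_self]
      · intro x hx
        by_cases hxab : x = (⟨a, b⟩ : Σ _ : Fin N, Fin N)
        · subst hxab
          simp [hτdef, Equiv.swap_apply_left, Equiv.swap_apply_right]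
        · have hne2 : (⟨τ x.1, τ x.2⟩ : Σ _ : Fin N, Fin N) ≠ ⟨a, b⟩ := by
            intro hc
            have h1 : τ x.1 = a := congrArg Sigma.fst hc
            have hx1 : x.1 = b := by
              have := congrArg τ h1
              simpa [hτdef, Equiv.swap_apply_self, Equiv.swap_apply_left] using this
            have h2 : τ x.2 = b := by
              have := (Sigma.mk.inj_iff.mp hc).2
              exact eq_of_heq this
            have hx2 : x.2 = a := by
              have := congrArg τ h2
              simpa [hτdef, Equiv.swap_apply_self, Equiv.swap_apply_right] using this
            obtain ⟨x1, x2⟩ := x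
            simp only at hx1 hx2
            subst hx1; subst hx2
            simp only [hS, Finset.mem_sigma, Finset.mem_univ, Finset.mem_Ioi, true_and] at hx
            exact absurd hx (not_lt.mpr (le_of_lt hab'))
          simp [hxab, hne2]
    rw [step]
    rw [← Finset.mul_prod_erase S _ hmemab]
    simp only [if_pos rfl]
    congr 1
    refine Finset.prod_congr rfl fun x hx => ?_
    rw [if_neg (Finset.ne_of_mem_erase hx)]
  -- sign computation
  have hsign : ((Equiv.Perm.sign (σ * τ) : ℤ) : ℂ) = -((Equiv.Perm.sign σ : ℤ) : ℂ) := by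
    rw [Equiv.Perm.sign_mul, hτdef, Equiv.Perm.sign_swap hne]
    push_cast
    ring
  have hprod2 : (∏ i : Fin N, ∏ j ∈ Finset.Ioi i,
      (p + q * ξ ((σ * τ) i) * ξ ((σ * τ) j) - ξ ((σ * τ) i)))
      = ∏ i : Fin N, ∏ j ∈ Finset.Ioi i, h (τ i) (τ j) := by
    rfl
  rw [hF σ, hF (σ * τ), hprod2, key1, key2, hsign]
  show _ * (h b a) + _ * (h a b) = 0
  ring
end

section
/- Suppose a function G(ξ₁,…,ξ_n), symmetric in its variables, is a rational function bounded as each ξ_i → ∞ (with the others fixed), and such that the product G · ∏_{i<j}(ξ_i − ξ_j) is a polynomial. Then G is itself a polynomial; combined with the boundedness, G of degree at most 0 in each variable, it is constant if bounded in all variables simultaneously. -/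
open Finset
open MvPolynomial

lemma aux_sub_dvd {n : ℕ} (i j : Fin n) (p : MvPolynomial (Fin n) ℂ) :
    (X i - X j) ∣ p - aeval (Function.update X i (X j)) p := by
  set u : Fin n → MvPolynomial (Fin n) ℂ := Function.update X i (X j) with hu
  induction p using MvPolynomial.induction_on with
  | C a => simp
  | add p q hp hq =>
      have : (p + q) - aeval u (p + q) = (p - aeval u p) + (q - aeval u q) := by
        rw [map_add]; ring
      rw [this]; exact dvd_add hp hq
  | mul_X p k hp =>
      have hXk : aeval (R := ℂ) u (X k) = u k := by simp
      have key : p * X k - aeval u (p * X k)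
          = (p - aeval u p) * X k + aeval u p * (X k - u k) := by
        rw [map_mul, hXk]; ring
      rw [key]
      refine dvd_add (Dvd.dvd.mul_right hp _) (Dvd.dvd.mul_left ?_ _)
      by_cases hk : k = i
      · subst hk; rw [hu, Function.update_self]
      · rw [hu, Function.update_of_ne hk]; simp

lemma aux_prime {n : ℕ} {i j : Fin n} (hij : i ≠ j) :
    Prime ((X i : MvPolynomial (Fin n) ℂ) - X j) := by
  have hne : (X i : MvPolynomial (Fin n) ℂ) - X j ≠ 0 := by
    intro h
    have := congrArg (MvPolynomial.eval (fun m => if m = i then (1:ℂ) else 0)) h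
    simp [hij, hij.symm] at this
  set g : MvPolynomial (Fin n) ℂ →+* MvPolynomial (Fin n) ℂ :=
    (aeval (R := ℂ) (Function.update X i (X j))).toRingHom with hg
  have hker : RingHom.ker g = Ideal.span {(X i : MvPolynomial (Fin n) ℂ) - X j} := by
    apply le_antisymm
    · intro p hp
      rw [Ideal.mem_span_singleton]
      have h0 : g p = 0 := hp
      have := aux_sub_dvd i j p
      rwa [show aeval (Function.update X i (X j)) p = g p from rfl, h0, sub_zero] at this
    · rw [Ideal.span_le, Set.singleton_subset_iff]
      have : g (X i - X j) = 0 := by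
        simp [hg, Function.update_of_ne (Ne.symm hij)]
      exact this
  have hprime : (Ideal.span {(X i : MvPolynomial (Fin n) ℂ) - X j}).IsPrime := by
    rw [← hker]; exact RingHom.ker_isPrime g
  exact (Ideal.span_singleton_prime hne).mp hprime

lemma aux_not_assoc {n : ℕ} {i j k l : Fin n} (hij : i < j) (hkl : k < l)
    (hne : (i, j) ≠ (k, l)) :
    ¬ Associated ((X i : MvPolynomial (Fin n) ℂ) - X j) (X k - X l) := by
  rintro ⟨u, hu⟩
  obtain ⟨ξ, hξij, hξkl⟩ : ∃ ξ : Fin n → ℂ, ξ i = ξ j ∧ ξ k ≠ ξ l := by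
    by_cases hk : k = i ∨ k = j
    · refine ⟨fun m => if m = l then 1 else 0, ?_, ?_⟩
      · have hi : i ≠ l := by
          rcases hk with rfl | rfl
          · exact hkl.ne
          · exact (hij.trans hkl).ne
        have hj : j ≠ l := by
          rcases hk with rfl | rfl
          · rintro rfl; exact hne rfl
          · exact hkl.ne
        simp [hi, hj]
      · simp [hkl.ne]
    · push_neg at hk
      refine ⟨fun m => if m = k then 1 else 0, by simp [Ne.symm hk.1, Ne.symm hk.2], by simp [hkl.ne']⟩
  have := congrArg (MvPolynomial.eval ξ) hu
  simp only [map_mul, map_sub, MvPolynomial.eval_X, hξij, sub_self, zero_mul] at this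
  exact hξkl (sub_eq_zero.mp this.symm)

lemma aux_prod_dvd {α : Type*} [CommRing α] [IsDomain α] {ι : Type*} [DecidableEq ι]
    (s : Finset ι) (f : ι → α) (P : α)
    (hp : ∀ i ∈ s, Prime (f i))
    (hna : ∀ i ∈ s, ∀ j ∈ s, i ≠ j → ¬ Associated (f i) (f j))
    (hd : ∀ i ∈ s, f i ∣ P) : (∏ i ∈ s, f i) ∣ P := by
  induction s using Finset.induction with
  | empty => simp
  | @insert a s ha ih =>
      obtain ⟨Q, hQ⟩ := ih (fun i hi => hp i (mem_insert_of_mem hi))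
        (fun i hi j hj => hna i (mem_insert_of_mem hi) j (mem_insert_of_mem hj))
        (fun i hi => hd i (mem_insert_of_mem hi))
      have hpa : Prime (f a) := hp a (mem_insert_self a s)
      have hda : f a ∣ (∏ i ∈ s, f i) * Q := by rw [← hQ]; exact hd a (mem_insert_self a s)
      have hnd : ¬ f a ∣ ∏ i ∈ s, f i := by
        intro h
        obtain ⟨b, hb, hab⟩ := hpa.exists_mem_finset_dvd h
        exact hna a (mem_insert_self a s) b (mem_insert_of_mem hb)
          (fun h' => ha (h' ▸ hb)) (hpa.associated_of_dvd (hp b (mem_insert_of_mem hb)) hab)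
      obtain ⟨R, hR⟩ := (hpa.dvd_or_dvd hda).resolve_left hnd
      rw [Finset.prod_insert ha, hQ, hR]
      ring_nf
      exact Dvd.intro R rfl

lemma aux_aeval_eq_eval {n : ℕ} (f : Fin n → ℂ) (p : MvPolynomial (Fin n) ℂ) :
    aeval f p = MvPolynomial.eval f p := by
  rw [← MvPolynomial.coe_aeval_eq_eval]; rfl

lemma aux_poly_aeval_eq_eval (t : ℂ) (p : Polynomial ℂ) :
    Polynomial.aeval t p = Polynomial.eval t p := by
  simp [Polynomial.aeval_def, Polynomial.eval₂_eq_eval_map]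

/-- The symmetrization/Vandermonde argument: a symmetric (continuous) rational function
G, bounded as each variable tends to ∞ with the others fixed, such that
G · ∏_{i<j}(ξ_i − ξ_j) is a polynomial, is itself a polynomial; and if it is bounded in
all variables simultaneously it is constant. -/
theorem symmetric_vandermonde_argument (n : ℕ) (G : (Fin n → ℂ) → ℂ)
    (hcont : Continuous G)
    (hsym : ∀ (σ : Equiv.Perm (Fin n)) (ξ : Fin n → ℂ), G (ξ ∘ σ) = G ξ)
    (hpoly : ∃ P : MvPolynomial (Fin n) ℂ, ∀ ξ : Fin n → ℂ,
      G ξ * ∏ i : Fin n, ∏ j ∈ Finset.Ioi i, (ξ i - ξ j) = MvPolynomial.eval ξ P)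
    (hbdd : ∀ (ξ : Fin n → ℂ) (i : Fin n), ∃ C : ℝ, ∀ z : ℂ,
      ‖G (Function.update ξ i z)‖ ≤ C) :
    (∃ Q : MvPolynomial (Fin n) ℂ, ∀ ξ : Fin n → ℂ, G ξ = MvPolynomial.eval ξ Q) ∧
      ((∃ C : ℝ, ∀ ξ : Fin n → ℂ, ‖G ξ‖ ≤ C) → ∃ c : ℂ, ∀ ξ, G ξ = c) := by
  classical
  obtain ⟨P, hP⟩ := hpoly
  set V : MvPolynomial (Fin n) ℂ := ∏ i : Fin n, ∏ j ∈ Ioi i, (X i - X j) with hV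
  have hVeval : ∀ ξ : Fin n → ℂ,
      MvPolynomial.eval ξ V = ∏ i : Fin n, ∏ j ∈ Ioi i, (ξ i - ξ j) := by
    intro ξ; rw [hV]; simp
  -- each linear factor divides P
  have hpair : ∀ i j : Fin n, i < j → ((X i : MvPolynomial (Fin n) ℂ) - X j) ∣ P := by
    intro i j hij
    set u : Fin n → MvPolynomial (Fin n) ℂ := Function.update X i (X j) with hu
    have hgP : aeval u P = 0 := by
      apply MvPolynomial.funext (q := 0)
      intro ξ
      have h1 : MvPolynomial.eval ξ (aeval u P)
          = aeval (R := ℂ) (fun m => aeval (R := ℂ) ξ (u m)) P := by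
        rw [← aux_aeval_eq_eval ξ]
        exact MvPolynomial.comp_aeval_apply u (aeval (R := ℂ) ξ) P
      have h2 : (fun m => aeval (R := ℂ) ξ (u m)) = Function.update ξ i (ξ j) := by
        funext m
        by_cases hm : m = i
        · subst hm; simp [hu]
        · simp [hu, Function.update_of_ne hm]
      rw [h1, h2, aux_aeval_eq_eval, ← hP]
      have h3 : (∏ i' : Fin n, ∏ j' ∈ Ioi i', (Function.update ξ i (ξ j) i'
          - Function.update ξ i (ξ j) j')) = 0 := by
        apply Finset.prod_eq_zero (Finset.mem_univ i)
        apply Finset.prod_eq_zero (Finset.mem_Ioi.mpr hij)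
        simp [Function.update_of_ne hij.ne']
      rw [h3, mul_zero]
      simp
    have h4 := aux_sub_dvd i j P
    have hgP' : aeval (Function.update (X : Fin n → MvPolynomial (Fin n) ℂ) i (X j)) P = 0 := hgP
    rwa [hgP', sub_zero] at h4
  -- the Vandermonde divides P
  have hVdvd : V ∣ P := by
    have hVsig : V = ∏ x ∈ (univ : Finset (Fin n)).sigma (fun i => Ioi i),
        ((X x.1 : MvPolynomial (Fin n) ℂ) - X x.2) := by
      rw [Finset.prod_sigma]
    rw [hVsig]
    apply aux_prod_dvd
    · intro x hx
      exact aux_prime (Finset.mem_Ioi.mp (Finset.mem_sigma.mp hx).2).ne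
    · intro x hx y hy hxy
      apply aux_not_assoc (Finset.mem_Ioi.mp (Finset.mem_sigma.mp hx).2)
        (Finset.mem_Ioi.mp (Finset.mem_sigma.mp hy).2)
      intro h
      rw [Prod.ext_iff] at h
      exact hxy (Sigma.ext h.1 (heq_of_eq h.2))
    · intro x hx
      exact hpair x.1 x.2 (Finset.mem_Ioi.mp (Finset.mem_sigma.mp hx).2)
  obtain ⟨Q, hQ⟩ := hVdvd
  -- G = eval Q wherever V ≠ 0
  have key : ∀ ξ : Fin n → ℂ, MvPolynomial.eval ξ V ≠ 0 → G ξ = MvPolynomial.eval ξ Q := by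
    intro ξ hne
    have h1 := hP ξ
    rw [← hVeval ξ, hQ, map_mul] at h1
    have h2 : G ξ * MvPolynomial.eval ξ V = MvPolynomial.eval ξ Q * MvPolynomial.eval ξ V := by
      rw [h1]; ring
    exact mul_right_cancel₀ hne h2
  -- G = eval Q everywhere, by continuity
  have hGQ : ∀ ξ : Fin n → ℂ, G ξ = MvPolynomial.eval ξ Q := by
    intro ξ
    set c : Fin n → ℂ := fun m => ((m : ℕ) : ℂ) with hc
    set F : ℂ → ℂ := fun t => G (fun m => ξ m + t * c m)
      - MvPolynomial.eval (fun m => ξ m + t * c m) Q with hF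
    have hFcont : Continuous F := by
      have hl : Continuous (fun t : ℂ => (fun m => ξ m + t * c m)) := by
        apply continuous_pi
        intro m
        exact continuous_const.add (continuous_id.mul continuous_const)
      exact (hcont.comp hl).sub ((MvPolynomial.continuous_eval Q).comp hl)
    set q : Polynomial ℂ := ∏ i : Fin n, ∏ j ∈ Ioi i,
      (Polynomial.C (ξ i - ξ j) + Polynomial.C (c i - c j) * Polynomial.X) with hq
    have hqeval : ∀ t : ℂ, q.eval t = MvPolynomial.eval (fun m => ξ m + t * c m) V := by
      intro t
      rw [hVeval, hq]
      simp only [Polynomial.eval_prod, Polynomial.eval_add, Polynomial.eval_mul,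
        Polynomial.eval_C, Polynomial.eval_X]
      exact Finset.prod_congr rfl fun i _ => Finset.prod_congr rfl fun j _ => by ring
    have hq0 : q ≠ 0 := by
      rw [hq]
      apply Finset.prod_ne_zero_iff.mpr
      intro i _
      apply Finset.prod_ne_zero_iff.mpr
      intro j hj
      intro h
      have hcoeff := congrArg (fun r : Polynomial ℂ => r.coeff 1) h
      simp at hcoeff
      have hij : (i : ℕ) = (j : ℕ) := Nat.cast_injective (R := ℂ) (by
        have := sub_eq_zero.mp hcoeff
        simpa [hc] using this)
      exact absurd (Fin.val_injective hij) (Finset.mem_Ioi.mp hj).ne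
    have hzero : Set.EqOn F (fun _ => 0) {t : ℂ | q.IsRoot t}ᶜ := by
      intro t ht
      simp only [Set.mem_compl_iff, Set.mem_setOf_eq, Polynomial.IsRoot] at ht
      have := key (fun m => ξ m + t * c m) (by rw [← hqeval]; exact ht)
      simpa [hF] using sub_eq_zero.mpr this
    have hdense : Dense {t : ℂ | q.IsRoot t}ᶜ :=
      ((Polynomial.finite_setOf_isRoot hq0).countable).dense_compl ℂ
    have hF0 : G (fun m => ξ m + (0:ℂ) * c m)
        - MvPolynomial.eval (fun m => ξ m + (0:ℂ) * c m) Q = 0 :=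
      congrFun (Continuous.ext_on hdense hFcont continuous_const hzero) 0
    have hx0 : (fun m => ξ m + (0:ℂ) * c m) = ξ := by funext m; ring_nf
    rw [hx0] at hF0
    exact sub_eq_zero.mp hF0
  refine ⟨⟨Q, hGQ⟩, ?_⟩
  rintro ⟨C, hC⟩
  refine ⟨G 0, fun ξ => ?_⟩
  set p : Polynomial ℂ :=
    aeval (R := ℂ) (fun m => Polynomial.C (ξ m) * Polynomial.X) Q with hp'
  have hpt : ∀ t : ℂ, p.eval t = G (fun m => ξ m * t) := by
    intro t
    have h1 : Polynomial.aeval (R := ℂ) t p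
        = aeval (R := ℂ) (fun m => Polynomial.aeval (R := ℂ) t
            (Polynomial.C (ξ m) * Polynomial.X)) Q := by
      rw [hp']
      exact MvPolynomial.comp_aeval_apply _ (Polynomial.aeval t) Q
    have h2 : (fun m => Polynomial.aeval (R := ℂ) t (Polynomial.C (ξ m) * Polynomial.X))
        = fun m => ξ m * t := by
      funext m; simp
    rw [← aux_poly_aeval_eq_eval, h1, h2, aux_aeval_eq_eval, ← hGQ]
  by_cases hdeg : 0 < p.degree
  · exfalso
    set w : ℂ := ((|C| + 1 : ℝ) : ℂ) with hw
    have hdw : 0 < (p - Polynomial.C w).degree := by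
      rwa [Polynomial.degree_sub_C hdeg]
    obtain ⟨z, hz⟩ := Complex.exists_root hdw
    have hzval : p.eval z = w := by
      have h := hz
      simp only [Polynomial.IsRoot, Polynomial.eval_sub, Polynomial.eval_C] at h
      exact sub_eq_zero.mp h
    have hb := hC (fun m => ξ m * z)
    rw [← hpt z, hzval] at hb
    have hnw : ‖w‖ = |C| + 1 := by
      rw [hw, Complex.norm_real, Real.norm_eq_abs, abs_of_nonneg (by positivity : (0:ℝ) ≤ |C| + 1)]
    rw [hnw] at hb
    linarith [le_abs_self C]
  · push_neg at hdeg
    have hpc : p = Polynomial.C (p.coeff 0) := Polynomial.eq_C_of_degree_le_zero hdeg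
    have h1 : G ξ = p.eval 1 := by
      rw [hpt 1]; congr 1; funext m; ring
    have h0 : G 0 = p.eval 0 := by
      rw [hpt 0]; congr 1; funext m; simp
    rw [h1, h0, hpc]; simp
end
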